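/- arXiv:2206.05231 — 5 statements merged into one kernel-verified Lean document; each statement's English description precedes it below -/
import Mathlib

section
/- Let scl be a scaling, f : (0,∞) → (0,∞) a non-increasing function, and (r_n)_{n≥1} a positive sequence decreasing to 0 such that log r_{n+1} / log r_n → 1 as n → ∞. Then inf{α > 0 : f(ε)·scl_α(ε) → 0 as ε → 0} = inf{α > 0 : f(r_n)·scl_α(r_n) → 0 as n → ∞} and sup{α > 0 : f(ε)·scl_α(ε) → +∞ as ε → 0} = sup{α > 0 : f(r_n)·scl_α(r_n) → +∞ as n → ∞}. -/
open Filter MeasureTheory Metric Set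
open scoped ENNReal Topology NNReal

noncomputable section

/-- A *scaling* is a family `(s α)_{α>0}` of positive non-decreasing functions on `(0,1)`
such that for all `α > β > 0` there is `λ₀ > 1` with, for every `λ ∈ (1, λ₀)`,
`s α ε / s β (ε^λ) → 0` and `s α ε / (s β ε)^λ → 0` as `ε → 0⁺`. -/
def IsScaling (s : ℝ → ℝ → ℝ) : Prop :=
  (∀ α : ℝ, 0 < α → ∀ ε ∈ Set.Ioo (0:ℝ) 1, 0 < s α ε) ∧
  (∀ α : ℝ, 0 < α → MonotoneOn (s α) (Set.Ioo (0:ℝ) 1)) ∧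
  (∀ α β : ℝ, 0 < β → β < α → ∃ l₀ > (1:ℝ), ∀ l ∈ Set.Ioo (1:ℝ) l₀,
    Tendsto (fun ε : ℝ => s α ε / s β (ε ^ l)) (𝓝[>] (0:ℝ)) (𝓝 0) ∧
    Tendsto (fun ε : ℝ => s α ε / (s β ε) ^ l) (𝓝[>] (0:ℝ)) (𝓝 0))

/-- The covering number `N_ε(E)`: minimal cardinality of a finite cover of `E` by balls of
radius `ε` centered in `E` (`+∞` if there is no such finite cover). -/
def coveringNumber {X : Type*} [MetricSpace X] (E : Set X) (ε : ℝ) : ℝ≥0∞ :=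
  ⨅ (t : Finset X) (_ : (↑t : Set X) ⊆ E ∧ E ⊆ ⋃ x ∈ t, ball x ε), (t.card : ℝ≥0∞)

/-- Lower box scale of a set. -/
def lowerBoxScale {X : Type*} [MetricSpace X] (s : ℝ → ℝ → ℝ) (E : Set X) : ℝ≥0∞ :=
  ⨆ (α : ℝ) (_ : 0 < α ∧ Tendsto (fun ε : ℝ => coveringNumber E ε * ENNReal.ofReal (s α ε))
      (𝓝[>] (0:ℝ)) (𝓝 (⊤ : ℝ≥0∞))), ENNReal.ofReal α

/-- Upper box scale of a set. -/
def upperBoxScale {X : Type*} [MetricSpace X] (s : ℝ → ℝ → ℝ) (E : Set X) : ℝ≥0∞ :=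
  ⨅ (α : ℝ) (_ : 0 < α ∧ Tendsto (fun ε : ℝ => coveringNumber E ε * ENNReal.ofReal (s α ε))
      (𝓝[>] (0:ℝ)) (𝓝 (0 : ℝ≥0∞))), ENNReal.ofReal α

/-- `H_ε^φ(E)`: Hausdorff pre-measure at scale `ε`, via countable covers by balls of radii
at most `ε`. -/
def hausdorffPre {X : Type*} [MetricSpace X] (φ : ℝ → ℝ) (E : Set X) (ε : ℝ) : ℝ≥0∞ :=
  ⨅ (c : ℕ → X) (r : ℕ → ℝ) (t : Set ℕ)
    (_ : (∀ n ∈ t, r n ∈ Set.Ioc (0:ℝ) ε) ∧ E ⊆ ⋃ n ∈ t, ball (c n) (r n)),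
    ∑' n : t, ENNReal.ofReal (φ (r n))

/-- `H^φ(E) = lim_{ε→0} H_ε^φ(E)`. -/
def hausdorffMeasureOf {X : Type*} [MetricSpace X] (φ : ℝ → ℝ) (E : Set X) : ℝ≥0∞ :=
  ⨆ (ε : ℝ) (_ : 0 < ε), hausdorffPre φ E ε

/-- Hausdorff scale of a set. -/
def hausdorffScale {X : Type*} [MetricSpace X] (s : ℝ → ℝ → ℝ) (E : Set X) : ℝ≥0∞ :=
  ⨆ (α : ℝ) (_ : 0 < α ∧ hausdorffMeasureOf (s α) E = ⊤), ENNReal.ofReal α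

/-- Packing scale of a set, via countable covers and upper box scales. -/
def packingScale {X : Type*} [MetricSpace X] (s : ℝ → ℝ → ℝ) (A : Set X) : ℝ≥0∞ :=
  ⨅ (E : ℕ → Set X) (_ : (⋃ n, E n) = A), ⨆ n, upperBoxScale s (E n)

/-- Lower local scale of a measure at a point. -/
def lowerLocalScale {X : Type*} [MetricSpace X] [MeasurableSpace X]
    (s : ℝ → ℝ → ℝ) (μ : Measure X) (x : X) : ℝ≥0∞ :=
  ⨆ (α : ℝ) (_ : 0 < α ∧ Tendsto (fun ε : ℝ => μ (ball x ε) / ENNReal.ofReal (s α ε))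
      (𝓝[>] (0:ℝ)) (𝓝 (0 : ℝ≥0∞))), ENNReal.ofReal α

/-- Upper local scale of a measure at a point. -/
def upperLocalScale {X : Type*} [MetricSpace X] [MeasurableSpace X]
    (s : ℝ → ℝ → ℝ) (μ : Measure X) (x : X) : ℝ≥0∞ :=
  ⨅ (α : ℝ) (_ : 0 < α ∧ Tendsto (fun ε : ℝ => μ (ball x ε) / ENNReal.ofReal (s α ε))
      (𝓝[>] (0:ℝ)) (𝓝 (⊤ : ℝ≥0∞))), ENNReal.ofReal α

/-- Scale of a measure: infimum of the scale over Borel sets of positive measure. -/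
def measureScale {X : Type*} [MetricSpace X] [MeasurableSpace X]
    (sc : Set X → ℝ≥0∞) (μ : Measure X) : ℝ≥0∞ :=
  ⨅ (E : Set X) (_ : MeasurableSet E ∧ 0 < μ E), sc E

/-- `*`-scale of a measure: infimum of the scale over Borel sets of full measure. -/
def measureScaleStar {X : Type*} [MetricSpace X] [MeasurableSpace X]
    (sc : Set X → ℝ≥0∞) (μ : Measure X) : ℝ≥0∞ :=
  ⨅ (E : Set X) (_ : MeasurableSet E ∧ μ Eᶜ = 0), sc E

/-- Quantization number `Q_μ(ε)`. -/
def quantizationNumber {X : Type*} [MetricSpace X] [MeasurableSpace X]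
    (μ : Measure X) (ε : ℝ) : ℝ≥0∞ :=
  ⨅ (t : Finset X) (_ : ∫⁻ x, (⨅ c ∈ t, edist x c) ∂μ ≤ ENNReal.ofReal ε), (t.card : ℝ≥0∞)

/-- Lower quantization scale of a measure. -/
def lowerQuantScale {X : Type*} [MetricSpace X] [MeasurableSpace X]
    (s : ℝ → ℝ → ℝ) (μ : Measure X) : ℝ≥0∞ :=
  ⨆ (α : ℝ) (_ : 0 < α ∧ Tendsto (fun ε : ℝ => quantizationNumber μ ε * ENNReal.ofReal (s α ε))
      (𝓝[>] (0:ℝ)) (𝓝 (⊤ : ℝ≥0∞))), ENNReal.ofReal α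

/-- Upper quantization scale of a measure. -/
def upperQuantScale {X : Type*} [MetricSpace X] [MeasurableSpace X]
    (s : ℝ → ℝ → ℝ) (μ : Measure X) : ℝ≥0∞ :=
  ⨅ (α : ℝ) (_ : 0 < α ∧ Tendsto (fun ε : ℝ => quantizationNumber μ ε * ENNReal.ofReal (s α ε))
      (𝓝[>] (0:ℝ)) (𝓝 (0 : ℝ≥0∞))), ENNReal.ofReal α

/-- Packing number `Ñ_ε(E)`: maximal cardinality of an `ε`-separated subset of `E`. -/
def packingNumber {X : Type*} [MetricSpace X] (E : Set X) (ε : ℝ) : ℝ≥0∞ :=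
  ⨆ (t : Finset X) (_ : (↑t : Set X) ⊆ E ∧ ∀ x ∈ t, ∀ y ∈ t, x ≠ y → ε ≤ dist x y),
    (t.card : ℝ≥0∞)

/-- `P_ε^φ(E)`: supremum of `Σ φ(r_i)` over `ε`-packs of `E` (pairwise disjoint balls of `E`,
centered in `E`, with radii at most `ε`). -/
def packingPre {X : Type*} [MetricSpace X] (φ : ℝ → ℝ) (E : Set X) (ε : ℝ) : ℝ≥0∞ :=
  ⨆ (t : Finset (X × ℝ)) (_ : (∀ p ∈ t, p.1 ∈ E ∧ p.2 ∈ Set.Ioc (0:ℝ) ε) ∧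
      (↑t : Set (X × ℝ)).Pairwise fun p q => Disjoint (ball p.1 p.2 ∩ E) (ball q.1 q.2 ∩ E)),
    ∑ p ∈ t, ENNReal.ofReal (φ p.2)

/-- The packing pre-measure `P_0^φ(E) = lim_{ε→0} P_ε^φ(E)`. -/
def packingPre0 {X : Type*} [MetricSpace X] (φ : ℝ → ℝ) (E : Set X) : ℝ≥0∞ :=
  ⨅ (ε : ℝ) (_ : 0 < ε), packingPre φ E ε

/-- The packing `φ`-measure `P^φ(E)`. -/
def packingMeasureOf {X : Type*} [MetricSpace X] (φ : ℝ → ℝ) (E : Set X) : ℝ≥0∞ :=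
  ⨅ (F : ℕ → Set X) (_ : (⋃ n, F n) = E), ∑' n, packingPre0 φ (F n)


lemma exists_sandwich (r : ℕ → ℝ) (hrdec : StrictAnti r)
    (hr0 : Tendsto r atTop (𝓝 0)) (N : ℕ) (ε : ℝ) (hε0 : 0 < ε) (hε : ε < r N) :
    ∃ m, N ≤ m ∧ r (m + 1) < ε ∧ ε ≤ r m := by
  classical
  have h : ∃ k, r k < ε := by
    have := (hr0.eventually_lt_const hε0)
    exact this.exists
  set m0 := Nat.find h with hm0def
  have hm0 : r m0 < ε := Nat.find_spec h
  have hNm : N < m0 := by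
    by_contra hle
    push_neg at hle
    have : r N ≤ r m0 := hrdec.antitone hle
    linarith
  refine ⟨m0 - 1, by omega, ?_, ?_⟩
  · have h1 : m0 - 1 + 1 = m0 := by omega
    rw [h1]; exact hm0
  · have := Nat.find_min h (m := m0 - 1) (by omega)
    linarith

section key
variable (s : ℝ → ℝ → ℝ) (hs : IsScaling s)
    (f : ℝ → ℝ) (hfpos : ∀ ε ∈ Set.Ioi (0:ℝ), 0 < f ε) (hf : AntitoneOn f (Set.Ioi 0))
    (r : ℕ → ℝ) (hrpos : ∀ n, 0 < r n) (hrdec : StrictAnti r)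
    (hr0 : Tendsto r atTop (𝓝 0))
    (hrlog : Tendsto (fun n => Real.log (r (n + 1)) / Real.log (r n)) atTop (𝓝 1))

include hs hfpos hf hrpos hrdec hr0 hrlog in
lemma key_zero (α β : ℝ) (hα : 0 < α) (hαβ : α < β)
    (hseq : Tendsto (fun n : ℕ => f (r n) * s α (r n)) atTop (𝓝 0)) :
    Tendsto (fun ε : ℝ => f ε * s β ε) (𝓝[>] (0:ℝ)) (𝓝 0) := by
  obtain ⟨l₀, hl₀, hl⟩ := hs.2.2 β α hα hαβ
  set l := (1 + l₀) / 2 with hldef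
  have hl1 : 1 < l := by simp only [hldef]; linarith
  have hll0 : l < l₀ := by simp only [hldef]; linarith
  obtain ⟨hdiv, -⟩ := hl l ⟨hl1, hll0⟩
  have htendr : Tendsto r atTop (𝓝[>] (0:ℝ)) :=
    tendsto_nhdsWithin_of_tendsto_nhds_of_eventually_within _ hr0
      (Eventually.of_forall fun n => hrpos n)
  have hcomp : Tendsto (fun n => s β (r n) / s α (r n ^ l)) atTop (𝓝 0) := hdiv.comp htendr
  have hr0' : Tendsto (fun n => r (n + 1)) atTop (𝓝 0) := hr0.comp (tendsto_add_atTop_nat 1)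
  have E1 : ∀ᶠ n in atTop, r n < 1 := hr0.eventually_lt_const one_pos
  have E1' : ∀ᶠ n in atTop, r (n + 1) < 1 := hr0'.eventually_lt_const one_pos
  have E2 : ∀ᶠ n in atTop, Real.log (r (n + 1)) / Real.log (r n) < l :=
    hrlog.eventually_lt_const hl1
  have E3 : ∀ᶠ n in atTop, s β (r n) / s α (r n ^ l) < 1 := hcomp.eventually_lt_const one_pos
  rw [NormedAddCommGroup.tendsto_nhds_zero]
  intro δ hδ
  have E4 : ∀ᶠ n in atTop, f (r n) * s α (r n) < δ := hseq.eventually_lt_const hδ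
  obtain ⟨N, hN⟩ := eventually_atTop.mp ((E1.and (E1'.and (E2.and (E3.and E4)))))
  have hmem : Set.Ioo (0:ℝ) (r N) ∈ 𝓝[>] (0:ℝ) :=
    Ioo_mem_nhdsGT_of_mem ⟨le_refl 0, hrpos N⟩
  filter_upwards [hmem] with ε hε
  obtain ⟨hε0, hεN⟩ := hε
  obtain ⟨m, hmN, hrm1, hεm⟩ := exists_sandwich r hrdec hr0 N ε hε0 hεN
  obtain ⟨hrm1lt, hrm1'lt, hlog, hratio, -⟩ := hN m hmN
  obtain ⟨-, -, -, -, hδm⟩ := hN (m + 1) (by omega)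
  -- facts
  have hrm0 : 0 < r m := hrpos m
  have hlogneg : Real.log (r m) < 0 := Real.log_neg hrm0 hrm1lt
  have hpow : r m ^ l < r (m + 1) := by
    have h1 : l * Real.log (r m) < Real.log (r (m + 1)) := (div_lt_iff_of_neg hlogneg).mp hlog
    have h2 : r m ^ l = Real.exp (l * Real.log (r m)) := by
      rw [Real.rpow_def_of_pos hrm0]; ring_nf
    rw [h2, ← Real.exp_log (hrpos (m + 1))]
    exact Real.exp_lt_exp.mpr h1
  have hpowmem : r m ^ l ∈ Set.Ioo (0:ℝ) 1 :=
    ⟨Real.rpow_pos_of_pos hrm0 l, hpow.trans hrm1'lt⟩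
  have hsαpos : 0 < s α (r m ^ l) := hs.1 α hα _ hpowmem
  have hs1 : s β (r m) ≤ s α (r m ^ l) := ((div_lt_one hsαpos).mp hratio).le
  have hs2 : s α (r m ^ l) ≤ s α (r (m + 1)) :=
    hs.2.1 α hα hpowmem ⟨hrpos (m + 1), hrm1'lt⟩ hpow.le
  have hεmem : ε ∈ Set.Ioo (0:ℝ) 1 := ⟨hε0, lt_of_le_of_lt hεm hrm1lt⟩
  have hfe : f ε ≤ f (r (m + 1)) := hf (Set.mem_Ioi.mpr (hrpos (m + 1))) (Set.mem_Ioi.mpr hε0) hrm1.le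
  have hse : s β ε ≤ s β (r m) := hs.2.1 β (hα.trans hαβ) hεmem ⟨hrm0, hrm1lt⟩ hεm
  have hsβpos : 0 < s β ε := hs.1 β (hα.trans hαβ) ε hεmem
  have hfpos' : 0 < f ε := hfpos ε (Set.mem_Ioi.mpr hε0)
  have hfr : 0 < f (r (m + 1)) := hfpos _ (Set.mem_Ioi.mpr (hrpos (m + 1)))
  have key : f ε * s β ε ≤ f (r (m + 1)) * s α (r (m + 1)) :=
    mul_le_mul hfe (hse.trans (hs1.trans hs2)) hsβpos.le hfr.le
  have : f ε * s β ε < δ := lt_of_le_of_lt key hδm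
  rw [Real.norm_eq_abs, abs_of_nonneg (by positivity)]
  exact this

include hs hfpos hf hrpos hrdec hr0 hrlog in
lemma key_top (α β : ℝ) (hβ : 0 < β) (hβα : β < α)
    (hseq : Tendsto (fun n : ℕ => f (r n) * s α (r n)) atTop atTop) :
    Tendsto (fun ε : ℝ => f ε * s β ε) (𝓝[>] (0:ℝ)) atTop := by
  obtain ⟨l₀, hl₀, hl⟩ := hs.2.2 α β hβ hβα
  set l := (1 + l₀) / 2 with hldef
  have hl1 : 1 < l := by simp only [hldef]; linarith
  have hll0 : l < l₀ := by simp only [hldef]; linarith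
  obtain ⟨hdiv, -⟩ := hl l ⟨hl1, hll0⟩
  have htendr : Tendsto r atTop (𝓝[>] (0:ℝ)) :=
    tendsto_nhdsWithin_of_tendsto_nhds_of_eventually_within _ hr0
      (Eventually.of_forall fun n => hrpos n)
  have hcomp : Tendsto (fun n => s α (r n) / s β (r n ^ l)) atTop (𝓝 0) := hdiv.comp htendr
  have hr0' : Tendsto (fun n => r (n + 1)) atTop (𝓝 0) := hr0.comp (tendsto_add_atTop_nat 1)
  have E1 : ∀ᶠ n in atTop, r n < 1 := hr0.eventually_lt_const one_pos
  have E1' : ∀ᶠ n in atTop, r (n + 1) < 1 := hr0'.eventually_lt_const one_pos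
  have E2 : ∀ᶠ n in atTop, Real.log (r (n + 1)) / Real.log (r n) < l :=
    hrlog.eventually_lt_const hl1
  have E3 : ∀ᶠ n in atTop, s α (r n) / s β (r n ^ l) < 1 := hcomp.eventually_lt_const one_pos
  rw [Filter.tendsto_atTop]
  intro M
  have E4 : ∀ᶠ n in atTop, M ≤ f (r n) * s α (r n) := hseq.eventually_ge_atTop M
  obtain ⟨N, hN⟩ := eventually_atTop.mp ((E1.and (E1'.and (E2.and (E3.and E4)))))
  have hmem : Set.Ioo (0:ℝ) (r N) ∈ 𝓝[>] (0:ℝ) :=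
    Ioo_mem_nhdsGT_of_mem ⟨le_refl 0, hrpos N⟩
  filter_upwards [hmem] with ε hε
  obtain ⟨hε0, hεN⟩ := hε
  obtain ⟨m, hmN, hrm1, hεm⟩ := exists_sandwich r hrdec hr0 N ε hε0 hεN
  obtain ⟨hrm1lt, hrm1'lt, hlog, hratio, hMm⟩ := hN m hmN
  have hrm0 : 0 < r m := hrpos m
  have hlogneg : Real.log (r m) < 0 := Real.log_neg hrm0 hrm1lt
  have hpow : r m ^ l < r (m + 1) := by
    have h1 : l * Real.log (r m) < Real.log (r (m + 1)) := (div_lt_iff_of_neg hlogneg).mp hlog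
    have h2 : r m ^ l = Real.exp (l * Real.log (r m)) := by
      rw [Real.rpow_def_of_pos hrm0]; ring_nf
    rw [h2, ← Real.exp_log (hrpos (m + 1))]
    exact Real.exp_lt_exp.mpr h1
  have hpowmem : r m ^ l ∈ Set.Ioo (0:ℝ) 1 :=
    ⟨Real.rpow_pos_of_pos hrm0 l, hpow.trans hrm1'lt⟩
  have hsβpos : 0 < s β (r m ^ l) := hs.1 β hβ _ hpowmem
  have hs1 : s α (r m) ≤ s β (r m ^ l) := ((div_lt_one hsβpos).mp hratio).le
  have hs2 : s β (r m ^ l) ≤ s β (r (m + 1)) :=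
    hs.2.1 β hβ hpowmem ⟨hrpos (m + 1), hrm1'lt⟩ hpow.le
  have hεmem : ε ∈ Set.Ioo (0:ℝ) 1 := ⟨hε0, lt_of_le_of_lt hεm hrm1lt⟩
  have hfe : f (r m) ≤ f ε := hf (Set.mem_Ioi.mpr hε0) (Set.mem_Ioi.mpr hrm0) hεm
  have hse : s β (r (m + 1)) ≤ s β ε :=
    hs.2.1 β hβ ⟨hrpos (m + 1), hrm1'lt⟩ hεmem hrm1.le
  have hsαpos : 0 < s α (r m) := hs.1 α (hβ.trans hβα) _ ⟨hrm0, hrm1lt⟩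
  have hfpos' : 0 < f ε := hfpos ε (Set.mem_Ioi.mpr hε0)
  have key : f (r m) * s α (r m) ≤ f ε * s β ε :=
    mul_le_mul hfe ((hs1.trans hs2).trans hse) hsαpos.le hfpos'.le
  exact hMm.trans key
end key

/-- Sequential characterization of scales. -/
theorem scale_seq_characterization (s : ℝ → ℝ → ℝ) (hs : IsScaling s)
    (f : ℝ → ℝ) (hfpos : ∀ ε ∈ Set.Ioi (0:ℝ), 0 < f ε) (hf : AntitoneOn f (Set.Ioi 0))
    (r : ℕ → ℝ) (hrpos : ∀ n, 0 < r n) (hrdec : StrictAnti r)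
    (hr0 : Tendsto r atTop (𝓝 0))
    (hrlog : Tendsto (fun n => Real.log (r (n + 1)) / Real.log (r n)) atTop (𝓝 1)) :
    (⨅ (α : ℝ) (_ : 0 < α ∧
        Tendsto (fun ε : ℝ => f ε * s α ε) (𝓝[>] (0:ℝ)) (𝓝 0)), ENNReal.ofReal α) =
      (⨅ (α : ℝ) (_ : 0 < α ∧
        Tendsto (fun n : ℕ => f (r n) * s α (r n)) atTop (𝓝 0)), ENNReal.ofReal α) ∧
    (⨆ (α : ℝ) (_ : 0 < α ∧
        Tendsto (fun ε : ℝ => f ε * s α ε) (𝓝[>] (0:ℝ)) atTop), ENNReal.ofReal α) =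
      (⨆ (α : ℝ) (_ : 0 < α ∧
        Tendsto (fun n : ℕ => f (r n) * s α (r n)) atTop atTop), ENNReal.ofReal α) := by
  have htendr : Tendsto r atTop (𝓝[>] (0:ℝ)) :=
    tendsto_nhdsWithin_of_tendsto_nhds_of_eventually_within _ hr0
      (Eventually.of_forall fun n => hrpos n)
  constructor
  · apply le_antisymm
    · refine le_iInf₂ fun α hα => ?_
      refine ENNReal.le_of_forall_pos_le_add fun δ hδ _ => ?_
      have hcont : Tendsto (fun ε : ℝ => f ε * s (α + δ) ε) (𝓝[>] (0:ℝ)) (𝓝 0) :=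
        key_zero s hs f hfpos hf r hrpos hrdec hr0 hrlog α (α + δ) hα.1
          (by simpa using hδ) hα.2
      have hpos : 0 < α + (δ:ℝ) := by
        have := hα.1; have : (0:ℝ) ≤ δ := δ.coe_nonneg; linarith [hα.1]
      calc (⨅ (α : ℝ) (_ : 0 < α ∧
        Tendsto (fun ε : ℝ => f ε * s α ε) (𝓝[>] (0:ℝ)) (𝓝 0)), ENNReal.ofReal α)
          ≤ ENNReal.ofReal (α + δ) :=
            iInf₂_le (f := fun (a : ℝ) _ => ENNReal.ofReal a) (α + (δ:ℝ)) ⟨hpos, hcont⟩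
        _ = ENNReal.ofReal α + ENNReal.ofReal δ := ENNReal.ofReal_add hα.1.le δ.2
        _ = ENNReal.ofReal α + δ := by rw [ENNReal.ofReal_coe_nnreal]
    · refine le_iInf₂ fun α hα => ?_
      have hseq : Tendsto (fun n : ℕ => f (r n) * s α (r n)) atTop (𝓝 0) := hα.2.comp htendr
      exact iInf₂_le (f := fun (a : ℝ) _ => ENNReal.ofReal a) α ⟨hα.1, hseq⟩
  · apply le_antisymm
    · refine iSup₂_le fun α hα => ?_
      have hseq : Tendsto (fun n : ℕ => f (r n) * s α (r n)) atTop atTop := hα.2.comp htendr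
      exact le_iSup₂ (f := fun (a : ℝ) _ => ENNReal.ofReal a) α ⟨hα.1, hseq⟩
    · refine iSup₂_le fun α hα => ?_
      refine ENNReal.le_of_forall_pos_le_add fun δ hδ _ => ?_
      rcases lt_or_ge (δ : ℝ) α with hδα | hδα
      · have hcont : Tendsto (fun ε : ℝ => f ε * s (α - δ) ε) (𝓝[>] (0:ℝ)) atTop :=
          key_top s hs f hfpos hf r hrpos hrdec hr0 hrlog α (α - δ)
            (by linarith) (by have h0 : (0:ℝ) < δ := hδ; linarith) hα.2
        calc ENNReal.ofReal α ≤ ENNReal.ofReal (α - δ) + ENNReal.ofReal δ := by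
              calc ENNReal.ofReal α = ENNReal.ofReal ((α - δ) + δ) := by ring_nf
                _ ≤ _ := ENNReal.ofReal_add_le
          _ ≤ (⨆ (α : ℝ) (_ : 0 < α ∧
                Tendsto (fun ε : ℝ => f ε * s α ε) (𝓝[>] (0:ℝ)) atTop),
                ENNReal.ofReal α) + δ := by
              rw [ENNReal.ofReal_coe_nnreal]
              exact add_le_add_left
                (le_iSup₂ (f := fun (a : ℝ) _ => ENNReal.ofReal a) (α - (δ:ℝ))
                  ⟨by linarith, hcont⟩) _
      · calc ENNReal.ofReal α ≤ ENNReal.ofReal δ := ENNReal.ofReal_le_ofReal hδα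
          _ = (δ : ℝ≥0∞) := ENNReal.ofReal_coe_nnreal
          _ ≤ _ := le_add_self


end
end

section
/- Let (X,d) be a metric space and scl a scaling. Then sup{α > 0 : H^{scl_α}(X) = +∞} = inf{α > 0 : H^{scl_α}(X) = 0} (with sup ∅ = 0 and inf ∅ = +∞), so the Hausdorff scale of X is well defined by either formula. -/
open Filter MeasureTheory Metric Set
open scoped ENNReal Topology NNReal

noncomputable section

/-- Pointwise comparison of scaling functions: for `β < α`, `s α r ≤ δ * s β r` near 0. -/
lemma scaling_compare (s : ℝ → ℝ → ℝ) (hs : IsScaling s) {β α : ℝ}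
    (hβ : 0 < β) (hβα : β < α) {δ : ℝ} (hδ : 0 < δ) :
    ∃ ε₀ > (0:ℝ), ε₀ < 1 ∧ ∀ r ∈ Set.Ioc (0:ℝ) ε₀, s α r ≤ δ * s β r := by
  obtain ⟨l₀, hl₀, hl⟩ := hs.2.2 α β hβ hβα
  set l : ℝ := (1 + l₀) / 2 with hldef
  have hl1 : 1 < l := by rw [hldef]; linarith
  have hll₀ : l < l₀ := by rw [hldef]; linarith
  obtain ⟨hT, -⟩ := hl l ⟨hl1, hll₀⟩
  have hev : ∀ᶠ ε in 𝓝[>] (0:ℝ),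
      s α ε / s β (ε ^ l) < δ ∧ ε ∈ Set.Ioo (0:ℝ) 1 := by
    filter_upwards [hT (gt_mem_nhds hδ), Ioo_mem_nhdsGT_of_mem (by norm_num :
      (0:ℝ) ∈ Set.Ico (0:ℝ) 1)] with ε h1 h2 using ⟨h1, h2⟩
  obtain ⟨u, hu, hsub⟩ := mem_nhdsGT_iff_exists_Ioc_subset.mp hev
  have hu0 : (0:ℝ) < u := hu
  refine ⟨min u (1/2), by positivity, ?_, ?_⟩
  · exact lt_of_le_of_lt (min_le_right _ _) (by norm_num)
  · intro r hr
    have hr' : r ∈ Set.Ioc (0:ℝ) u := ⟨hr.1, hr.2.trans (min_le_left _ _)⟩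
    obtain ⟨hlt, hr01⟩ := hsub hr'
    have hr0 : 0 < r := hr01.1
    have hr1 : r < 1 := hr01.2
    have hrl0 : 0 < r ^ l := Real.rpow_pos_of_pos hr0 l
    have hrl : r ^ l ≤ r := by
      have := Real.rpow_le_rpow_of_exponent_ge hr0 hr1.le hl1.le
      simpa [Real.rpow_one] using this
    have hrl1 : r ^ l ∈ Set.Ioo (0:ℝ) 1 := ⟨hrl0, lt_of_le_of_lt hrl hr1⟩
    have hβpos : 0 < s β (r ^ l) := hs.1 β hβ _ hrl1
    have hmono : s β (r ^ l) ≤ s β r := hs.2.1 β hβ hrl1 hr01 hrl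
    have h1 : s α r < δ * s β (r ^ l) := by
      have := (div_lt_iff₀ hβpos).mp hlt
      linarith
    have h2 : δ * s β (r ^ l) ≤ δ * s β r := by
      exact mul_le_mul_of_nonneg_left hmono hδ.le
    linarith

/-- Antitonicity of the Hausdorff pre-measure in the scale. -/
lemma hausdorffPre_anti {X : Type*} [MetricSpace X] (φ : ℝ → ℝ) (E : Set X)
    {ε ε' : ℝ} (h : ε' ≤ ε) : hausdorffPre φ E ε ≤ hausdorffPre φ E ε' := by
  refine le_iInf fun c => le_iInf fun r => le_iInf fun t => le_iInf fun hc => ?_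
  refine iInf_le_of_le c (iInf_le_of_le r (iInf_le_of_le t (iInf_le_of_le ?_ le_rfl)))
  exact ⟨fun n hn => ⟨(hc.1 n hn).1, (hc.1 n hn).2.trans h⟩, hc.2⟩

/-- Comparison of Hausdorff pre-measures under pointwise comparison of gauges. -/
lemma hausdorffPre_le_mul {X : Type*} [MetricSpace X] (φ ψ : ℝ → ℝ) (E : Set X)
    {δ ε : ℝ} (hδ : 0 < δ) (hφψ : ∀ r ∈ Set.Ioc (0:ℝ) ε, φ r ≤ δ * ψ r) :
    hausdorffPre φ E ε ≤ ENNReal.ofReal δ * hausdorffPre ψ E ε := by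
  simp only [hausdorffPre]
  simp_rw [ENNReal.mul_iInf_of_ne (ENNReal.ofReal_pos.mpr hδ).ne' ENNReal.ofReal_ne_top]
  refine le_iInf fun c => le_iInf fun r => le_iInf fun t => le_iInf fun hc => ?_
  refine iInf_le_of_le c (iInf_le_of_le r (iInf_le_of_le t (iInf_le_of_le hc ?_)))
  rw [← ENNReal.tsum_mul_left]
  refine ENNReal.tsum_le_tsum fun n => ?_
  rw [← ENNReal.ofReal_mul hδ.le]
  exact ENNReal.ofReal_le_ofReal (hφψ _ (hc.1 n n.2))


/-- Key lemma: if `β < α` and `H^{s β}(X) < ∞`, then `H^{s α}(X) = 0`. -/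
lemma hausdorff_zero_of_finite {X : Type*} [MetricSpace X] (s : ℝ → ℝ → ℝ)
    (hs : IsScaling s) {β α : ℝ} (hβ : 0 < β) (hβα : β < α)
    (hfin : hausdorffMeasureOf (s β) (Set.univ : Set X) ≠ ⊤) :
    hausdorffMeasureOf (s α) (Set.univ : Set X) = 0 := by
  set C := hausdorffMeasureOf (s β) (Set.univ : Set X) with hC
  have key : ∀ δ : ℝ, 0 < δ →
      hausdorffMeasureOf (s α) (Set.univ : Set X) ≤ ENNReal.ofReal δ * C := by
    intro δ hδ
    obtain ⟨ε₀, hε₀, -, hcmp⟩ := scaling_compare s hs hβ hβα hδ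
    refine iSup_le fun ε => iSup_le fun hε => ?_
    have h1 : hausdorffPre (s α) (Set.univ : Set X) ε ≤
        hausdorffPre (s α) (Set.univ : Set X) (min ε ε₀) :=
      hausdorffPre_anti _ _ (min_le_left _ _)
    have h2 : hausdorffPre (s α) (Set.univ : Set X) (min ε ε₀) ≤
        ENNReal.ofReal δ * hausdorffPre (s β) (Set.univ : Set X) (min ε ε₀) := by
      refine hausdorffPre_le_mul _ _ _ hδ fun r hr => ?_
      exact hcmp r ⟨hr.1, hr.2.trans (min_le_right _ _)⟩
    have h3 : hausdorffPre (s β) (Set.univ : Set X) (min ε ε₀) ≤ C := by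
      rw [hC, hausdorffMeasureOf]
      exact le_iSup_of_le (min ε ε₀) (le_iSup_of_le (lt_min hε hε₀) le_rfl)
    calc hausdorffPre (s α) (Set.univ : Set X) ε
        ≤ ENNReal.ofReal δ * hausdorffPre (s β) (Set.univ : Set X) (min ε ε₀) :=
          h1.trans h2
      _ ≤ ENNReal.ofReal δ * C := mul_le_mul_right h3 _
  have htend : Tendsto (fun n : ℕ => ENNReal.ofReal (1 / (n + 1)) * C) atTop (𝓝 0) := by
    have h0 : Tendsto (fun n : ℕ => ENNReal.ofReal (1 / (n + 1))) atTop (𝓝 0) := by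
      rw [show (0 : ℝ≥0∞) = ENNReal.ofReal 0 from by simp]
      exact (ENNReal.continuous_ofReal.tendsto 0).comp
        tendsto_one_div_add_atTop_nhds_zero_nat
    simpa using ENNReal.Tendsto.mul_const h0 (Or.inr hfin)
  refine le_antisymm (ge_of_tendsto' htend fun n => key _ (by positivity)) zero_le

/-- The Hausdorff scale is well defined:
`sup {α > 0 : H^{scl_α}(X) = ∞} = inf {α > 0 : H^{scl_α}(X) = 0}`. -/
theorem hausdorffScale_sup_eq_inf
    {X : Type*} [MetricSpace X] (s : ℝ → ℝ → ℝ) (hs : IsScaling s) :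
    (⨆ (α : ℝ) (_ : 0 < α ∧ hausdorffMeasureOf (s α) (Set.univ : Set X) = ⊤),
        ENNReal.ofReal α) =
    (⨅ (α : ℝ) (_ : 0 < α ∧ hausdorffMeasureOf (s α) (Set.univ : Set X) = 0),
        ENNReal.ofReal α) := by
  refine le_antisymm ?_ ?_
  · refine iSup_le fun α => iSup_le fun hα => le_iInf fun β => le_iInf fun hβ => ?_
    refine ENNReal.ofReal_le_ofReal ?_
    by_contra hc
    push_neg at hc
    have := hausdorff_zero_of_finite s hs hβ.1 hc (hβ.2 ▸ ENNReal.zero_ne_top)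
    rw [hα.2] at this
    exact ENNReal.top_ne_zero this
  · by_contra h
    push_neg at h
    obtain ⟨c, hc1, hc2⟩ := exists_between h
    obtain ⟨d, hd1, hd2⟩ := exists_between hc1
    have hcT : c ≠ ⊤ := (hc2.trans_le le_top).ne
    have hdT : d ≠ ⊤ := (hd2.trans (hc2.trans_le le_top)).ne
    have hd0 : d ≠ 0 := (lt_of_le_of_lt zero_le hd1).ne'
    set β := d.toReal with hβdef
    set α := c.toReal with hαdef
    have hβpos : 0 < β := ENNReal.toReal_pos hd0 hdT
    have hβα : β < α := ENNReal.toReal_lt_toReal hdT hcT |>.mpr hd2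
    have hαpos : 0 < α := hβpos.trans hβα
    have hβfin : hausdorffMeasureOf (s β) (Set.univ : Set X) ≠ ⊤ := by
      intro htop
      have : ENNReal.ofReal β ≤
          ⨆ (γ : ℝ) (_ : 0 < γ ∧ hausdorffMeasureOf (s γ) (Set.univ : Set X) = ⊤),
            ENNReal.ofReal γ :=
        le_iSup₂ (f := fun (γ : ℝ) (_ : 0 < γ ∧
          hausdorffMeasureOf (s γ) (Set.univ : Set X) = ⊤) => ENNReal.ofReal γ)
          β ⟨hβpos, htop⟩
      rw [hβdef, ENNReal.ofReal_toReal hdT] at this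
      exact absurd (lt_of_lt_of_le hd1 this) (lt_irrefl _)
    have hα0 := hausdorff_zero_of_finite s hs hβpos hβα hβfin
    have : (⨅ (γ : ℝ) (_ : 0 < γ ∧ hausdorffMeasureOf (s γ) (Set.univ : Set X) = 0),
        ENNReal.ofReal γ) ≤ ENNReal.ofReal α :=
      iInf₂_le (f := fun (γ : ℝ) (_ : 0 < γ ∧
        hausdorffMeasureOf (s γ) (Set.univ : Set X) = 0) => ENNReal.ofReal γ)
        α ⟨hαpos, hα0⟩
    rw [hαdef, ENNReal.ofReal_toReal hcT] at this
    exact absurd (lt_of_lt_of_le hc2 this) (lt_irrefl _)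

end
end

section
/- Let (X,d) be a metric space and scl a scaling. Then the packing scale satisfies sup{α > 0 : P^{scl_α}(X) = +∞} = scl_P X = inf{α > 0 : P^{scl_α}(X) = 0} (with sup ∅ = 0 and inf ∅ = +∞), where P^φ denotes the packing φ-measure. -/
open Filter MeasureTheory Metric Set
open scoped ENNReal Topology NNReal

noncomputable section

section PSCAux


/-- Weighted AM-GM consequence: `θ(1-r) ≤ 1 - r^θ`. -/
lemma psc_KI {r θ : ℝ} (hr0 : 0 < r) (hr1 : r ≤ 1) (hθ0 : 0 < θ) (hθ1 : θ < 1) :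
    θ * (1 - r) ≤ 1 - r ^ θ := by
  have h := Real.geom_mean_le_arith_mean2_weighted hθ0.le (by linarith : (0:ℝ) ≤ 1 - θ)
    hr0.le zero_le_one (by ring)
  rw [Real.one_rpow, mul_one] at h
  linarith

/-- Key telescoping inequality: `x^(1+θ)(1/x - 1/y) ≤ (y^θ - x^θ)/θ`. -/
lemma psc_KI' {x y θ : ℝ} (hx : 0 < x) (hxy : x ≤ y) (hθ0 : 0 < θ) (hθ1 : θ < 1) :
    x ^ (1+θ) * (1/x - 1/y) ≤ (y ^ θ - x ^ θ) / θ := by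
  have hy : 0 < y := lt_of_lt_of_le hx hxy
  have hr0 : 0 < x / y := div_pos hx hy
  have hr1 : x / y ≤ 1 := (div_le_one hy).2 hxy
  have hKI := psc_KI hr0 hr1 hθ0 hθ1
  have hxθ : x ^ θ ≤ y ^ θ := Real.rpow_le_rpow hx.le hxy hθ0.le
  have hxθ0 : 0 < x ^ θ := Real.rpow_pos_of_pos hx θ
  have hyθ0 : 0 < y ^ θ := Real.rpow_pos_of_pos hy θ
  have hdiv : (x / y) ^ θ = x ^ θ / y ^ θ := Real.div_rpow hx.le hy.le θ
  have key : θ * (x ^ θ * (1 - x/y)) ≤ y ^ θ - x ^ θ := by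
    have h1 : θ * (x ^ θ * (1 - x/y)) ≤ θ * (y ^ θ * (1 - x/y)) := by
      have h0 : (0:ℝ) ≤ 1 - x/y := by linarith
      exact mul_le_mul_of_nonneg_left (mul_le_mul_of_nonneg_right hxθ h0) hθ0.le
    have h2 : θ * (y ^ θ * (1 - x/y)) ≤ y ^ θ * (1 - (x/y) ^ θ) := by
      nlinarith
    have h3 : y ^ θ * (1 - (x/y) ^ θ) = y ^ θ - x ^ θ := by
      rw [hdiv]; field_simp
    linarith
  have hlhs : x ^ (1+θ) * (1/x - 1/y) = x ^ θ * (1 - x/y) := by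
    rw [Real.rpow_add hx, Real.rpow_one]
    field_simp
  rw [hlhs, le_div_iff₀ hθ0]
  linarith [key]

/-- The Abel-summation invariant, by induction. -/
lemma psc_core_inv (θ η : ℝ) (hθ0 : 0 < θ) (hθ1 : θ < 1) (hη : 0 ≤ η)
    (K : ℕ) (a c : ℕ → ℝ) (m : ℕ → ℕ)
    (hc : ∀ k, K ≤ k → 0 < c k) (hcm : ∀ k, K ≤ k → c (k+1) ≤ c k)
    (ha0 : ∀ k, K ≤ k → 0 ≤ a k) (ham : ∀ k, K ≤ k → a (k+1) ≤ a k)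
    (hac : ∀ k, K + 1 ≤ k → a k ≤ η * c k ^ (1+θ))
    (hM : ∀ n, K ≤ n → (∑ k ∈ Finset.Icc (K+1) n, (m k : ℝ)) ≤ η / c n) :
    ∀ n, K ≤ n →
      (∑ k ∈ Finset.Icc (K+1) n, (m k : ℝ) * a k)
        + (η / c n - ∑ k ∈ Finset.Icc (K+1) n, (m k : ℝ)) * a (n+1)
      ≤ η^2 * c K ^ θ + η^2 * (c K ^ θ - c n ^ θ)/θ := by
  intro n hn
  induction n, hn using Nat.le_induction with
  | base =>
    rw [Finset.Icc_eq_empty_of_lt (Nat.lt_succ_self K)]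
    simp only [Finset.sum_empty, sub_zero, zero_add]
    have hcK : 0 < c K := hc K le_rfl
    have hcK1 : 0 < c (K+1) := hc (K+1) (Nat.le_succ K)
    have h1 : a (K+1) ≤ η * c K ^ (1+θ) := by
      refine le_trans (hac (K+1) le_rfl) ?_
      exact mul_le_mul_of_nonneg_left
        (Real.rpow_le_rpow hcK1.le (hcm K le_rfl) (by linarith)) hη
    have h2 : η / c K * a (K+1) ≤ η / c K * (η * c K ^ (1+θ)) :=
      mul_le_mul_of_nonneg_left h1 (by positivity)
    have h3 : η / c K * (η * c K ^ (1+θ)) = η^2 * c K ^ θ := by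
      rw [Real.rpow_add hcK, Real.rpow_one]
      field_simp
    calc η / c K * a (K+1) ≤ η^2 * c K ^ θ := by rw [← h3]; exact h2
      _ = η^2 * c K ^ θ + η^2 * (c K ^ θ - c K ^ θ)/θ := by
          rw [sub_self]; ring
  | succ n hn ih =>
    have hKn1 : K + 1 ≤ n + 1 := Nat.succ_le_succ hn
    rw [Finset.sum_Icc_succ_top hKn1, Finset.sum_Icc_succ_top hKn1]
    set S := ∑ k ∈ Finset.Icc (K+1) n, (m k : ℝ) * a k with hS
    set M := ∑ k ∈ Finset.Icc (K+1) n, (m k : ℝ) with hM'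
    have hcn : 0 < c n := hc n hn
    have hcn1 : 0 < c (n+1) := hc (n+1) (le_trans hn (Nat.le_succ n))
    have hccm : c (n+1) ≤ c n := hcm n hn
    have ha1 : a (n+1+1) ≤ a (n+1) := ham (n+1) (by omega)
    have ha2 : a (n+1) ≤ η * c (n+1) ^ (1+θ) := hac (n+1) (by omega)
    have hM1 : M + (m (n+1):ℝ) ≤ η / c (n+1) := by
      have h := hM (n+1) (by omega)
      rwa [Finset.sum_Icc_succ_top hKn1] at h
    have hdd : η / c n ≤ η / c (n+1) := by
      rw [div_eq_mul_inv, div_eq_mul_inv]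
      refine mul_le_mul_of_nonneg_left ?_ hη
      rw [← one_div, ← one_div]
      exact one_div_le_one_div_of_le hcn1 hccm
    have hKI2 := psc_KI' hcn1 hccm hθ0 hθ1
    have p1 : (η / c (n+1) - (M + (m (n+1):ℝ))) * a (n+1+1)
        ≤ (η / c (n+1) - (M + (m (n+1):ℝ))) * a (n+1) :=
      mul_le_mul_of_nonneg_left ha1 (by linarith)
    have p2 : (η / c (n+1) - η / c n) * a (n+1)
        ≤ η^2 * ((c n ^ θ - c (n+1) ^ θ)/θ) := by
      calc (η / c (n+1) - η / c n) * a (n+1)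
          ≤ (η / c (n+1) - η / c n) * (η * c (n+1) ^ (1+θ)) :=
            mul_le_mul_of_nonneg_left ha2 (by linarith)
        _ = η^2 * (c (n+1) ^ (1+θ) * (1/(c (n+1)) - 1/(c n))) := by ring
        _ ≤ η^2 * ((c n ^ θ - c (n+1) ^ θ)/θ) :=
            mul_le_mul_of_nonneg_left hKI2 (sq_nonneg η)
    calc S + (m (n+1):ℝ) * a (n+1)
          + (η / c (n+1) - (M + (m (n+1):ℝ))) * a (n+1+1)
        ≤ S + (m (n+1):ℝ) * a (n+1)
          + (η / c (n+1) - (M + (m (n+1):ℝ))) * a (n+1) := by linarith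
      _ = (S + (η / c n - M) * a (n+1)) + (η / c (n+1) - η / c n) * a (n+1) := by
          ring
      _ ≤ (η^2 * c K ^ θ + η^2 * (c K ^ θ - c n ^ θ)/θ)
          + η^2 * ((c n ^ θ - c (n+1) ^ θ)/θ) := add_le_add ih p2
      _ = η^2 * c K ^ θ + η^2 * (c K ^ θ - c (n+1) ^ θ)/θ := by ring

/-- Conclusion of the Abel summation estimate. -/
lemma psc_core (θ η : ℝ) (hθ0 : 0 < θ) (hθ1 : θ < 1) (hη : 0 ≤ η)
    (K : ℕ) (a c : ℕ → ℝ) (m : ℕ → ℕ)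
    (hc : ∀ k, K ≤ k → 0 < c k) (hcm : ∀ k, K ≤ k → c (k+1) ≤ c k)
    (ha0 : ∀ k, K ≤ k → 0 ≤ a k) (ham : ∀ k, K ≤ k → a (k+1) ≤ a k)
    (hac : ∀ k, K + 1 ≤ k → a k ≤ η * c k ^ (1+θ))
    (hM : ∀ n, K ≤ n → (∑ k ∈ Finset.Icc (K+1) n, (m k : ℝ)) ≤ η / c n) :
    ∀ n, K ≤ n → (∑ k ∈ Finset.Icc (K+1) n, (m k : ℝ) * a k)
      ≤ η^2 * c K ^ θ * (1 + 1/θ) := by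
  intro n hn
  have hinv := psc_core_inv θ η hθ0 hθ1 hη K a c m hc hcm ha0 ham hac hM n hn
  have hcn : 0 < c n := hc n hn
  have h1 : 0 ≤ (η / c n - ∑ k ∈ Finset.Icc (K+1) n, (m k : ℝ)) * a (n+1) :=
    mul_nonneg (by linarith [hM n hn]) (ha0 (n+1) (by omega))
  have h2 : 0 ≤ c n ^ θ := (Real.rpow_pos_of_pos hcn θ).le
  have h3 : η^2 * (c K ^ θ - c n ^ θ)/θ ≤ η^2 * c K ^ θ / θ := by
    gcongr
    nlinarith [sq_nonneg η]
  calc (∑ k ∈ Finset.Icc (K+1) n, (m k : ℝ) * a k)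
      ≤ η^2 * c K ^ θ + η^2 * (c K ^ θ - c n ^ θ)/θ := by linarith
    _ ≤ η^2 * c K ^ θ + η^2 * c K ^ θ / θ := by linarith
    _ = η^2 * c K ^ θ * (1 + 1/θ) := by ring




/-- Extract a positive threshold from an eventual property near `0⁺`. -/
lemma psc_event {P : ℝ → Prop} (h : ∀ᶠ x in 𝓝[>] (0:ℝ), P x) :
    ∃ δ > (0:ℝ), ∀ x, 0 < x → x < δ → P x := by
  rw [eventually_nhdsWithin_iff, Metric.eventually_nhds_iff] at h
  obtain ⟨δ, hδ, H⟩ := h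
  refine ⟨δ, hδ, fun x hx hxδ => H ?_ hx⟩
  simpa [Real.dist_eq, abs_of_pos hx] using hxδ

/-- `2^(-x) → 0` as `x → ∞`. -/
lemma psc_tendsto_D : Tendsto (fun x : ℝ => (2:ℝ) ^ (-x)) atTop (𝓝 0) := by
  have h1 : Tendsto (fun x : ℝ => Real.log 2 * -x) atTop atBot := by
    have := (tendsto_neg_atTop_atBot : Tendsto (fun x:ℝ => -x) atTop atBot).atBot_mul_const' (r := Real.log 2)
      (Real.log_pos one_lt_two)
    simpa [mul_comm] using this
  have h2 := Real.tendsto_exp_atBot.comp h1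
  refine h2.congr fun x => ?_
  simp [Function.comp, Real.rpow_def_of_pos (two_pos : (0:ℝ) < 2)]

/-- Dyadic classification of a radius `r ∈ (0,1)`. -/
lemma psc_dyadic {r : ℝ} (hr0 : 0 < r) (hr1 : r < 1) :
    (2:ℝ) ^ (-((⌊-(Real.logb 2 r)⌋₊ : ℝ)) - 1) < r ∧
      r ≤ (2:ℝ) ^ (-(⌊-(Real.logb 2 r)⌋₊ : ℝ)) := by
  set x := -(Real.logb 2 r) with hxdef
  have hx0 : 0 < x := by
    have : Real.logb 2 r < 0 := Real.logb_neg one_lt_two hr0 hr1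
    simp [hxdef]; linarith
  have hfl : (⌊x⌋₊ : ℝ) ≤ x := Nat.floor_le hx0.le
  have hfl2 : x < ⌊x⌋₊ + 1 := Nat.lt_floor_add_one x
  have hr : (2:ℝ) ^ (-x) = r := by
    rw [show -x = Real.logb 2 r by simp [hxdef]]
    exact Real.rpow_logb two_pos (by norm_num) hr0
  constructor
  · calc (2:ℝ) ^ (-(⌊x⌋₊:ℝ) - 1) < 2 ^ (-x) :=
        Real.rpow_lt_rpow_of_exponent_lt one_lt_two (by linarith)
      _ = r := hr
  · calc r = (2:ℝ)^(-x) := hr.symm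
      _ ≤ 2 ^ (-(⌊x⌋₊:ℝ)) := Real.rpow_le_rpow_of_exponent_le one_le_two (by linarith)

/-- If `r ≤ 2^(-(K+1))` then the dyadic scale of `r` is at least `K+1`. -/
lemma psc_dyadic_ge {r : ℝ} (K : ℕ) (hr0 : 0 < r) (hr : r ≤ (2:ℝ) ^ (-((K:ℝ)+1))) :
    K + 1 ≤ ⌊-(Real.logb 2 r)⌋₊ := by
  have h2 : Real.logb 2 r ≤ -((K:ℝ)+1) := by
    have := Real.logb_le_logb_of_le (b := 2) one_lt_two hr0 hr
    rwa [Real.logb_rpow two_pos (by norm_num)] at this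
  apply Nat.le_floor
  push_cast
  linarith

/-- A `2δ`-separated subset of `E` has cardinality at most the covering number at scale `δ`. -/
lemma psc_sep_card_le_cov {X : Type*} [MetricSpace X] {E : Set X} {u : Finset X} {δ : ℝ}
    (hu : ↑u ⊆ E) (hsep : ∀ x ∈ u, ∀ y ∈ u, x ≠ y → 2*δ ≤ dist x y) :
    (u.card : ℝ≥0∞) ≤ coveringNumber E δ := by
  refine le_iInf fun t => le_iInf fun ht => ?_
  rcases u.eq_empty_or_nonempty with hu0 | ⟨x₀, hx₀⟩
  · simp [hu0]
  have hX : Nonempty X := ⟨x₀⟩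
  have hex : ∀ x : X, ∃ c, x ∈ u → c ∈ t ∧ x ∈ ball c δ := by
    intro x
    by_cases hx : x ∈ u
    · have hmem := ht.2 (hu hx)
      simp only [mem_iUnion, exists_prop] at hmem
      obtain ⟨c, hc, hbc⟩ := hmem
      exact ⟨c, fun _ => ⟨hc, hbc⟩⟩
    · exact ⟨Classical.arbitrary X, fun h => absurd h hx⟩
  choose f hf using hex
  have hcard : u.card ≤ t.card := by
    apply Finset.card_le_card_of_injOn f (fun a ha => (hf a ha).1)
    intro a ha b hb hab
    by_contra hne
    have h1 : dist a (f a) < δ := mem_ball.mp (hf a (by exact_mod_cast ha)).2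
    have h2 : dist b (f b) < δ := mem_ball.mp (hf b (by exact_mod_cast hb)).2
    have h3 : 2*δ ≤ dist a b :=
      hsep a (by exact_mod_cast ha) b (by exact_mod_cast hb) hne
    have h4 : dist a b ≤ dist a (f a) + dist (f a) b := dist_triangle a (f a) b
    rw [hab] at h1
    rw [hab, dist_comm (f b) b] at h4
    linarith
  exact_mod_cast hcard





section Pack

variable {X : Type*} [MetricSpace X]

/-- A `2δ`-separated finset of `E` yields a packing, bounding its cardinality. -/
lemma psc_sep_le_pre {φ : ℝ → ℝ} {F : Set X} {ε₀ δ : ℝ} (hδ0 : 0 < δ) (hδε : δ ≤ ε₀)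
    (u : Finset X) (hu : ↑u ⊆ F)
    (hsep : ∀ x ∈ u, ∀ y ∈ u, x ≠ y → 2*δ ≤ dist x y) :
    (u.card : ℝ≥0∞) * ENNReal.ofReal (φ δ) ≤ packingPre φ F ε₀ := by
  set t : Finset (X × ℝ) := u.map ⟨fun x => (x, δ), Prod.mk_left_injective δ⟩ with ht
  have hcond : (∀ p ∈ t, p.1 ∈ F ∧ p.2 ∈ Set.Ioc (0:ℝ) ε₀) ∧
      (↑t : Set (X × ℝ)).Pairwise fun p q => Disjoint (ball p.1 p.2 ∩ F) (ball q.1 q.2 ∩ F) := by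
    constructor
    · intro p hp
      rw [ht, Finset.mem_map] at hp
      obtain ⟨x, hx, rfl⟩ := hp
      exact ⟨hu hx, hδ0, hδε⟩
    · intro p hp q hq hpq
      simp only [ht, Finset.coe_map, Set.mem_image, Finset.mem_coe] at hp hq
      obtain ⟨x, hx, rfl⟩ := hp
      obtain ⟨y, hy, rfl⟩ := hq
      simp only [Function.Embedding.coeFn_mk] at hpq ⊢
      have hxy : x ≠ y := fun h => hpq (by rw [h])
      rw [Set.disjoint_left]
      rintro z ⟨hz1, -⟩ ⟨hz2, -⟩
      have h1 : dist z x < δ := mem_ball.mp hz1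
      have h2 : dist z y < δ := mem_ball.mp hz2
      have h3 := hsep x hx y hy hxy
      have h4 := dist_triangle x z y
      rw [dist_comm z x] at h1
      linarith
  have hsum : ∑ p ∈ t, ENNReal.ofReal (φ p.2) = (u.card : ℝ≥0∞) * ENNReal.ofReal (φ δ) := by
    rw [ht, Finset.sum_map]
    simp [Finset.sum_const, nsmul_eq_mul]
  calc (u.card : ℝ≥0∞) * ENNReal.ofReal (φ δ) = ∑ p ∈ t, ENNReal.ofReal (φ p.2) := hsum.symm
    _ ≤ packingPre φ F ε₀ := le_iSup₂ (f := fun (t : Finset (X × ℝ)) (_ : _) =>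
        ∑ p ∈ t, ENNReal.ofReal (φ p.2)) t hcond

/-- Covering-number bound from a finite packing pre-measure. -/
lemma psc_cov_le_pre {φ : ℝ → ℝ} {F : Set X} {ε₀ δ : ℝ} (hφδ : 0 < φ δ)
    (hδ0 : 0 < δ) (hδε : δ ≤ ε₀) (hC : packingPre φ F ε₀ ≠ ⊤) :
    coveringNumber F (2*δ) * ENNReal.ofReal (φ δ) ≤ packingPre φ F ε₀ := by
  classical
  set C := packingPre φ F ε₀ with hCdef
  set v := ENNReal.ofReal (φ δ) with hvdef
  have hv0 : v ≠ 0 := by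
    simp only [hvdef, ne_eq, ENNReal.ofReal_eq_zero, not_le]
    exact hφδ
  have hvtop : v ≠ ⊤ := ENNReal.ofReal_ne_top
  set P : ℕ → Prop := fun n => ∃ u : Finset X,
    (↑u ⊆ F ∧ ∀ x ∈ u, ∀ y ∈ u, x ≠ y → 2*δ ≤ dist x y) ∧ u.card = n with hP
  have hbound : ∀ n, P n → (n:ℝ) ≤ (C / v).toReal := by
    rintro n ⟨u, ⟨hu, hsep⟩, hcard⟩
    have h1 : (n : ℝ≥0∞) ≤ C / v := by
      rw [ENNReal.le_div_iff_mul_le (Or.inl hv0) (Or.inl hvtop), ← hcard]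
      exact psc_sep_le_pre hδ0 hδε u hu hsep
    have hfin : C / v ≠ ⊤ := (ENNReal.div_lt_top hC hv0).ne
    calc (n:ℝ) = ((n : ℝ≥0∞)).toReal := by simp
      _ ≤ (C/v).toReal := ENNReal.toReal_mono hfin h1
  set B : ℕ := ⌈(C / v).toReal⌉₊ with hB
  have hbound' : ∀ n, P n → n ≤ B := by
    intro n hn
    have h2 := (hbound n hn).trans (Nat.le_ceil _)
    exact_mod_cast h2
  haveI : DecidablePred P := Classical.decPred P
  have hP0 : P 0 := ⟨∅, ⟨by simp, by simp⟩, rfl⟩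
  obtain ⟨u, ⟨hu, hsep⟩, hcard⟩ := Nat.findGreatest_spec (Nat.zero_le B) hP0
  have hcover : F ⊆ ⋃ x ∈ u, ball x (2*δ) := by
    intro y hy
    by_contra hy'
    simp only [mem_iUnion, exists_prop, not_exists, not_and] at hy'
    have hynot : y ∉ u := fun h => hy' y h (mem_ball_self (by linarith))
    have hsep' : ∀ x ∈ insert y u, ∀ z ∈ insert y u, x ≠ z → 2*δ ≤ dist x z := by
      intro x hx z hz hxz
      rcases Finset.mem_insert.mp hx with rfl | hx' <;>
        rcases Finset.mem_insert.mp hz with rfl | hz'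
      · exact absurd rfl hxz
      · have h := hy' z hz'
        rw [mem_ball] at h
        push_neg at h
        simpa [dist_comm] using h
      · have h := hy' x hx'
        rw [mem_ball] at h
        push_neg at h
        simpa [dist_comm] using h
      · exact hsep x hx' z hz' hxz
    have hPn : P (u.card + 1) := ⟨insert y u,
      ⟨by rw [Finset.coe_insert]; exact Set.insert_subset_iff.mpr ⟨hy, hu⟩, hsep'⟩,
      Finset.card_insert_of_notMem hynot⟩
    exact Nat.findGreatest_is_greatest (hcard ▸ Nat.lt_succ_self _) (hbound' _ hPn) hPn
  have hcov : coveringNumber F (2*δ) ≤ (u.card : ℝ≥0∞) :=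
    iInf_le_of_le u (iInf_le_of_le ⟨hu, hcover⟩ le_rfl)
  calc coveringNumber F (2*δ) * v ≤ (u.card : ℝ≥0∞) * v := mul_le_mul_left hcov v
    _ ≤ C := psc_sep_le_pre hδ0 hδε u hu hsep

end Pack

section L2

variable {X : Type*} [MetricSpace X]

/-- If the packing pre-measure for gauge `s α` is finite, the upper box scale is `≤ α`. -/
lemma psc_box_le (s : ℝ → ℝ → ℝ) (hs : IsScaling s) {F : Set X} {α : ℝ} (hα : 0 < α)
    (h : packingPre0 (s α) F ≠ ⊤) :
    upperBoxScale s F ≤ ENNReal.ofReal α := by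
  -- extract a finite pre-measure at some scale ε₀
  have hlt : packingPre0 (s α) F < ⊤ := h.lt_top
  rw [packingPre0] at hlt
  obtain ⟨ε₀, hε₀⟩ := iInf_lt_iff.mp hlt
  obtain ⟨hε₀pos, hCfin⟩ := iInf_lt_iff.mp hε₀
  set C := packingPre (s α) F ε₀ with hCdef
  have hC : C ≠ ⊤ := hCfin.ne
  -- the key tendsto property for every β > α
  have key : ∀ β : ℝ, α < β →
      Tendsto (fun ε : ℝ => coveringNumber F ε * ENNReal.ofReal (s β ε))
        (𝓝[>] (0:ℝ)) (𝓝 (0 : ℝ≥0∞)) := by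
    intro β hβ
    obtain ⟨l₀, hl₀, Hl⟩ := hs.2.2 β α hα hβ
    set l : ℝ := min ((1 + l₀)/2) 2 with hldef
    have hl1 : 1 < l := by
      rw [hldef]; rcases le_or_gt ((1 + l₀)/2) 2 with h' | h'
      · rw [min_eq_left h']; linarith
      · rw [min_eq_right h'.le]; norm_num
    have hll₀ : l < l₀ := by
      rw [hldef]
      calc min ((1 + l₀)/2) 2 ≤ (1 + l₀)/2 := min_le_left _ _
        _ < l₀ := by linarith
    have Hrat := (Hl l ⟨hl1, hll₀⟩).1
    rw [ENNReal.tendsto_nhds_zero]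
    intro η' hη'
    set η'' := min η' 1 with hη''
    have hη''0 : η'' ≠ 0 := (lt_min hη' zero_lt_one).ne'
    have hη''top : η'' ≠ ⊤ := by
      simp only [hη'']
      exact ne_top_of_le_ne_top ENNReal.one_ne_top (min_le_right _ _)
    set ρ : ℝ := (η'' / (C + 1)).toReal with hρdef
    have hCp0 : C + 1 ≠ 0 := by simp
    have hCptop : C + 1 ≠ ⊤ := by simp [hC]
    have hρ0 : 0 < ρ := ENNReal.toReal_pos
      (ENNReal.div_pos hη''0 hCptop).ne' (ENNReal.div_lt_top hη''top hCp0).ne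
    obtain ⟨δ₂, hδ₂0, hδ₂⟩ := psc_event (Hrat.eventually (gt_mem_nhds hρ0))
    set t₀ : ℝ := (1/2 : ℝ) ^ (1/(l-1)) with ht₀def
    have ht₀0 : 0 < t₀ := Real.rpow_pos_of_pos (by norm_num) _
    set δm : ℝ := min (min (2*ε₀) 1) (min δ₂ t₀) with hδm
    have hδm0 : 0 < δm := by
      simp only [hδm, lt_min_iff]
      refine ⟨⟨by linarith, one_pos⟩, hδ₂0, ht₀0⟩
    refine Filter.eventually_of_mem (Ioo_mem_nhdsGT_of_mem ⟨le_rfl, hδm0⟩) ?_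
    rintro ε ⟨hε0, hεδ⟩
    have hε1 : ε < 1 := lt_of_lt_of_le hεδ (le_trans (min_le_left _ _) (min_le_right _ _))
    have hε2ε₀ : ε < 2*ε₀ := lt_of_lt_of_le hεδ (le_trans (min_le_left _ _) (min_le_left _ _))
    have hεδ₂ : ε < δ₂ := lt_of_lt_of_le hεδ (le_trans (min_le_right _ _) (min_le_left _ _))
    have hεt₀ : ε ≤ t₀ := le_trans hεδ.le (le_trans (min_le_right _ _) (min_le_right _ _))
    set δ : ℝ := ε/2 with hδdef
    have hδ0 : 0 < δ := by simp [hδdef]; linarith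
    have hδε₀ : δ ≤ ε₀ := by rw [hδdef]; linarith
    have hδ1 : δ < 1 := by rw [hδdef]; linarith
    have hsαδ : 0 < s α δ := hs.1 α hα δ ⟨hδ0, hδ1⟩
    have hsβε : 0 < s β ε := hs.1 β (lt_trans hα hβ) ε ⟨hε0, hε1⟩
    -- covering bound
    have hcovb : coveringNumber F ε * ENNReal.ofReal (s α δ) ≤ C := by
      have := psc_cov_le_pre (φ := s α) hsαδ hδ0 hδε₀ hC
      rwa [show 2*δ = ε by rw [hδdef]; ring] at this
    have hcov : coveringNumber F ε ≤ C / ENNReal.ofReal (s α δ) := by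
      rw [ENNReal.le_div_iff_mul_le (Or.inl (by simpa using hsαδ)) (Or.inl ENNReal.ofReal_ne_top)]
      exact hcovb
    -- ratio bound
    have hεl1 : ε ^ (l-1) ≤ 1/2 := by
      calc ε ^ (l-1) ≤ t₀ ^ (l-1) := Real.rpow_le_rpow hε0.le hεt₀ (by linarith)
        _ = 1/2 := by
          rw [ht₀def, ← Real.rpow_mul (by norm_num), one_div (l-1),
            inv_mul_cancel₀ (by linarith : l - 1 ≠ 0), Real.rpow_one]
    have hεll : ε ^ l ≤ δ := by
      have h1 : ε ^ l = ε * ε ^ (l-1) := by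
        rw [← Real.rpow_one_add' hε0.le (by linarith : (1:ℝ) + (l-1) ≠ 0)]
        ring_nf
      rw [h1, hδdef]
      calc ε * ε ^ (l-1) ≤ ε * (1/2) :=
        mul_le_mul_of_nonneg_left hεl1 hε0.le
        _ = ε / 2 := by ring
    have hεl0 : 0 < ε ^ l := Real.rpow_pos_of_pos hε0 l
    have hmono : s α (ε ^ l) ≤ s α δ :=
      hs.2.1 α hα ⟨hεl0, lt_of_le_of_lt hεll hδ1⟩ ⟨hδ0, hδ1⟩ hεll
    have hsαεl : 0 < s α (ε ^ l) := hs.1 α hα _ ⟨hεl0, lt_of_le_of_lt hεll hδ1⟩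
    have hratio : s β ε / s α δ < ρ := by
      calc s β ε / s α δ ≤ s β ε / s α (ε ^ l) :=
            div_le_div_of_nonneg_left hsβε.le hsαεl hmono
        _ < ρ := hδ₂ ε hε0 hεδ₂
    have hfin2 : η'' / (C+1) ≠ ⊤ := (ENNReal.div_lt_top hη''top hCp0).ne
    calc coveringNumber F ε * ENNReal.ofReal (s β ε)
        ≤ (C / ENNReal.ofReal (s α δ)) * ENNReal.ofReal (s β ε) :=
          mul_le_mul_left hcov _
      _ = C * (ENNReal.ofReal (s β ε) / ENNReal.ofReal (s α δ)) := by
          rw [div_eq_mul_inv, div_eq_mul_inv, mul_right_comm, mul_assoc]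
      _ = C * ENNReal.ofReal (s β ε / s α δ) := by
          rw [ENNReal.ofReal_div_of_pos hsαδ]
      _ ≤ (C + 1) * ENNReal.ofReal ρ := by
          exact mul_le_mul' le_self_add (ENNReal.ofReal_le_ofReal hratio.le)
      _ = (C + 1) * (η'' / (C+1)) := by rw [hρdef, ENNReal.ofReal_toReal hfin2]
      _ = η'' := ENNReal.mul_div_cancel' (fun h => absurd h hCp0) (fun h => absurd h hCptop)
      _ ≤ η' := min_le_left _ _
  -- now conclude that the upper box scale is at most α
  apply ENNReal.le_of_forall_pos_le_add
  intro ζ hζ _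
  have hζ' : (0:ℝ) < (ζ:ℝ) := by exact_mod_cast hζ
  have h1 := key (α + ζ) (by linarith)
  have h2 : upperBoxScale s F ≤ ENNReal.ofReal (α + (ζ:ℝ)) :=
    iInf_le_of_le (α + ζ) (iInf_le_of_le ⟨by linarith, h1⟩ le_rfl)
  calc upperBoxScale s F ≤ ENNReal.ofReal (α + (ζ:ℝ)) := h2
    _ = ENNReal.ofReal α + ENNReal.ofReal (ζ:ℝ) := ENNReal.ofReal_add hα.le hζ'.le
    _ = ENNReal.ofReal α + ζ := by rw [ENNReal.ofReal_coe_nnreal]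

end L2

/-- L2: if the packing measure for gauge `s α` is not `⊤`, the packing scale is `≤ α`. -/
lemma psc_L2 {X : Type*} [MetricSpace X] (s : ℝ → ℝ → ℝ) (hs : IsScaling s) {α : ℝ}
    (hα : 0 < α) (h : packingMeasureOf (s α) (Set.univ : Set X) ≠ ⊤) :
    packingScale s (Set.univ : Set X) ≤ ENNReal.ofReal α := by
  have hlt : packingMeasureOf (s α) (Set.univ : Set X) < ⊤ := h.lt_top
  rw [packingMeasureOf] at hlt
  obtain ⟨F, hF1⟩ := iInf_lt_iff.mp hlt
  obtain ⟨hF, hsum⟩ := iInf_lt_iff.mp hF1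
  have hn : ∀ n, packingPre0 (s α) (F n) ≠ ⊤ := by
    intro n
    exact ((ENNReal.le_tsum n).trans_lt hsum).ne
  calc packingScale s (Set.univ : Set X) ≤ ⨆ n, upperBoxScale s (F n) :=
      iInf_le_of_le F (iInf_le_of_le hF le_rfl)
    _ ≤ ENNReal.ofReal α := iSup_le fun n => psc_box_le s hs hα (hn n)

end PSCAux


set_option maxHeartbeats 2000000 in
/-- L1 (core hard direction): if the covering numbers of `E` are controlled by gauge `s β`
with `β < α`, then the packing pre-measure of `E` for gauge `s α` vanishes. -/
lemma psc_L1 {X : Type*} [MetricSpace X] (s : ℝ → ℝ → ℝ) (hs : IsScaling s) {α β : ℝ}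
    (hβ : 0 < β) (hβα : β < α) (E : Set X)
    (hN : Tendsto (fun ε : ℝ => coveringNumber E ε * ENNReal.ofReal (s β ε))
      (𝓝[>] (0:ℝ)) (𝓝 (0:ℝ≥0∞))) :
    packingPre0 (s α) E = 0 := by
  classical
  have hα : 0 < α := hβ.trans hβα
  refine le_antisymm ?_ zero_le
  have key : ∀ η' : ℝ, 0 < η' → packingPre0 (s α) E ≤ ENNReal.ofReal η' := by
    intro η' hη'
    -- setup: intermediate exponent and scaling limits
    set γ : ℝ := (α+β)/2 with hγdef
    have hγ0 : 0 < γ := by rw [hγdef]; linarith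
    have hβγ : β < γ := by rw [hγdef]; linarith
    have hγα : γ < α := by rw [hγdef]; linarith
    obtain ⟨l₁, hl₁, H₁⟩ := hs.2.2 α γ hγ0 hγα
    obtain ⟨l₂, hl₂, H₂⟩ := hs.2.2 γ β hβ hβγ
    set l : ℝ := min (min ((1+l₁)/2) ((1+l₂)/2)) (3/2) with hldef
    have hl1 : 1 < l := by
      rw [hldef]
      simp only [lt_min_iff]
      refine ⟨⟨by linarith, by linarith⟩, by norm_num⟩
    have hll₁ : l < l₁ := by
      calc l ≤ (1+l₁)/2 := le_trans (min_le_left _ _) (min_le_left _ _)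
        _ < l₁ := by linarith
    have hll₂ : l < l₂ := by
      calc l ≤ (1+l₂)/2 := le_trans (min_le_left _ _) (min_le_right _ _)
        _ < l₂ := by linarith
    have hl32 : l ≤ 3/2 := min_le_right _ _
    set θ : ℝ := l - 1 with hθdef
    have hθ0 : 0 < θ := by rw [hθdef]; linarith
    have hθ1 : θ < 1 := by rw [hθdef]; linarith
    have hl0 : (0:ℝ) < l := by linarith
    have C1 := (H₁ l ⟨hl1, hll₁⟩).2
    have C2 := (H₂ l ⟨hl1, hll₂⟩).1
    -- the small parameter η
    have hsγhalf : 0 < s γ (1/2) := hs.1 γ hγ0 (1/2) ⟨by norm_num, by norm_num⟩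
    set Cst : ℝ := (s γ (1/2)) ^ θ * (1 + 1/θ) with hCstdef
    have hCst : 0 < Cst := by
      apply mul_pos (Real.rpow_pos_of_pos hsγhalf θ)
      have : 0 < 1/θ := by positivity
      linarith
    set η : ℝ := min 1 (η' / (Cst + 1)) with hηdef
    have hη0 : 0 < η := by
      rw [hηdef]
      exact lt_min one_pos (by positivity)
    have hη1 : η ≤ 1 := min_le_left _ _
    have hη2 : η ≤ η' / (Cst + 1) := min_le_right _ _
    -- thresholds
    obtain ⟨δ₂, hδ₂0, hδ₂⟩ := psc_event (C1.eventually (gt_mem_nhds hη0))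
    obtain ⟨δ₃, hδ₃0, hδ₃⟩ := psc_event (C2.eventually (gt_mem_nhds hη0))
    obtain ⟨δ₁, hδ₁0, hδ₁⟩ := psc_event
      ((ENNReal.tendsto_nhds_zero.mp hN) 1 zero_lt_one)
    -- choose the starting scale K
    have hKex : ∃ K : ℕ, ∀ k : ℕ, K ≤ k →
        ((2:ℝ) ^ (-(k:ℝ)) < δ₂ ∧ (2:ℝ) ^ (-(((k:ℝ)+2)/l)) < δ₃ ∧
          (2:ℝ) ^ (-((k:ℝ)+2)) < δ₁) ∧ (((k:ℝ)+2)/l ≤ (k:ℝ) ∧ 1 ≤ k) := by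
      have hnat : Tendsto (fun k : ℕ => (k:ℝ)) atTop atTop := tendsto_natCast_atTop_atTop
      have e1 : ∀ᶠ k : ℕ in atTop, (2:ℝ) ^ (-(k:ℝ)) < δ₂ :=
        (psc_tendsto_D.comp hnat).eventually (gt_mem_nhds hδ₂0)
      have e2 : ∀ᶠ k : ℕ in atTop, (2:ℝ) ^ (-(((k:ℝ)+2)/l)) < δ₃ := by
        have hexp : Tendsto (fun k : ℕ => ((k:ℝ)+2)/l) atTop atTop :=
          (tendsto_atTop_add_const_right _ 2 hnat).atTop_div_const hl0
        exact (psc_tendsto_D.comp hexp).eventually (gt_mem_nhds hδ₃0)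
      have e3 : ∀ᶠ k : ℕ in atTop, (2:ℝ) ^ (-((k:ℝ)+2)) < δ₁ := by
        have hexp : Tendsto (fun k : ℕ => ((k:ℝ)+2)) atTop atTop :=
          tendsto_atTop_add_const_right _ 2 hnat
        exact (psc_tendsto_D.comp hexp).eventually (gt_mem_nhds hδ₁0)
      have e4 : ∀ᶠ k : ℕ in atTop, ((k:ℝ)+2)/l ≤ (k:ℝ) := by
        rw [eventually_atTop]
        refine ⟨⌈2/θ⌉₊, fun k hk => ?_⟩
        have h1 : (2/θ : ℝ) ≤ (k:ℝ) := le_trans (Nat.le_ceil _) (by exact_mod_cast hk)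
        rw [div_le_iff₀ hl0]
        have h2 : 2 ≤ (k:ℝ) * θ := by
          rw [div_le_iff₀ hθ0] at h1
          linarith
        have : (k:ℝ) * l = (k:ℝ) + (k:ℝ)*θ := by rw [hθdef]; ring
        linarith
      have e5 : ∀ᶠ k : ℕ in atTop, 1 ≤ k := eventually_atTop.mpr ⟨1, fun k hk => hk⟩
      obtain ⟨K, hK⟩ := eventually_atTop.mp ((e1.and (e2.and e3)).and (e4.and e5))
      exact ⟨K, fun k hk => by
        obtain ⟨⟨a1, a2, a3⟩, a4, a5⟩ := hK k hk
        exact ⟨⟨a1, a2, a3⟩, a4, by exact_mod_cast a5⟩⟩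
    obtain ⟨K, hK⟩ := hKex
    have hK1 : 1 ≤ K := (hK K le_rfl).2.2
    -- the packing scale parameter
    set εp : ℝ := (2:ℝ) ^ (-((K:ℝ)+1)) with hεpdef
    have hεp0 : 0 < εp := Real.rpow_pos_of_pos two_pos _
    have hεp1 : εp < 1 := by
      apply Real.rpow_lt_one_of_one_lt_of_neg one_lt_two
      have : (0:ℝ) ≤ (K:ℝ) := Nat.cast_nonneg K
      linarith
    refine le_trans (iInf_le_of_le εp (iInf_le_of_le hεp0 le_rfl)) ?_
    refine iSup_le fun t => iSup_le fun ht => ?_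
    rcases t.eq_empty_or_nonempty with rfl | htne
    · simp
    -- sequences and dyadic facts
    set a : ℕ → ℝ := fun k => s α ((2:ℝ)^(-(k:ℝ))) with hadef
    set c : ℕ → ℝ := fun k => s γ ((2:ℝ)^(-(k:ℝ))) with hcdef
    have hD0 : ∀ k : ℕ, (0:ℝ) < (2:ℝ)^(-(k:ℝ)) := fun k => Real.rpow_pos_of_pos two_pos _
    have hD1 : ∀ k : ℕ, 1 ≤ k → (2:ℝ)^(-(k:ℝ)) < 1 := by
      intro k hk
      apply Real.rpow_lt_one_of_one_lt_of_neg one_lt_two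
      have : (1:ℝ) ≤ (k:ℝ) := by exact_mod_cast hk
      linarith
    have ha_pos : ∀ k : ℕ, 1 ≤ k → 0 < a k := fun k hk => hs.1 α hα _ ⟨hD0 k, hD1 k hk⟩
    have hc_pos : ∀ k : ℕ, 1 ≤ k → 0 < c k := fun k hk => hs.1 γ hγ0 _ ⟨hD0 k, hD1 k hk⟩
    set g : X × ℝ → ℕ := fun p => ⌊-(Real.logb 2 p.2)⌋₊ with hgdef
    have hrad : ∀ p ∈ t, 0 < p.2 ∧ p.2 ≤ εp := fun p hp => (ht.1 p hp).2
    have hgK : ∀ p ∈ t, K + 1 ≤ g p := fun p hp =>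
      psc_dyadic_ge K (hrad p hp).1 (hrad p hp).2
    have hdy : ∀ p ∈ t, (2:ℝ)^(-((g p):ℝ)-1) < p.2 ∧ p.2 ≤ (2:ℝ)^(-((g p):ℝ)) :=
      fun p hp => psc_dyadic (hrad p hp).1 (lt_of_le_of_lt (hrad p hp).2 hεp1)
    set K' := t.sup g with hK'def
    have hKK' : K ≤ K' := by
      obtain ⟨p, hp⟩ := htne
      exact le_trans (le_trans (Nat.le_succ K) (hgK p hp)) (Finset.le_sup hp)
    have hmap : ∀ p ∈ t, g p ∈ Finset.Icc (K+1) K' :=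
      fun p hp => Finset.mem_Icc.mpr ⟨hgK p hp, Finset.le_sup hp⟩
    set m : ℕ → ℕ := fun k => (t.filter (fun p => g p = k)).card with hmdef
    -- step 1 : fiberwise bound in ℝ≥0∞
    have step1 : ∑ p ∈ t, ENNReal.ofReal (s α p.2)
        ≤ ENNReal.ofReal (∑ k ∈ Finset.Icc (K+1) K', (m k : ℝ) * a k) := by
      rw [← Finset.sum_fiberwise_of_maps_to hmap (fun p => ENNReal.ofReal (s α p.2))]
      rw [ENNReal.ofReal_sum_of_nonneg ?hnn]
      case hnn =>
        intro k hk
        have hk1 : 1 ≤ k := by have := (Finset.mem_Icc.mp hk).1; omega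
        exact mul_nonneg (Nat.cast_nonneg _) (ha_pos k hk1).le
      apply Finset.sum_le_sum
      intro k hk
      have hk1 : 1 ≤ k := by have := (Finset.mem_Icc.mp hk).1; omega
      have hbound : ∀ p ∈ t.filter (fun p => g p = k),
          ENNReal.ofReal (s α p.2) ≤ ENNReal.ofReal (a k) := by
        intro p hp
        rw [Finset.mem_filter] at hp
        obtain ⟨hpt, hpk⟩ := hp
        apply ENNReal.ofReal_le_ofReal
        have h1 : p.2 ≤ (2:ℝ)^(-(k:ℝ)) := by rw [← hpk]; exact (hdy p hpt).2
        exact hs.2.1 α hα ⟨(hrad p hpt).1, lt_of_le_of_lt h1 (hD1 k hk1)⟩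
          ⟨hD0 k, hD1 k hk1⟩ h1
      calc ∑ p ∈ t.filter (fun p => g p = k), ENNReal.ofReal (s α p.2)
          ≤ (t.filter (fun p => g p = k)).card • ENNReal.ofReal (a k) :=
            Finset.sum_le_card_nsmul _ _ _ hbound
        _ = ENNReal.ofReal ((m k : ℝ) * a k) := by
            rw [nsmul_eq_mul, ENNReal.ofReal_mul (Nat.cast_nonneg _),
              ENNReal.ofReal_natCast]
    -- step 2 : the cumulative counting bound
    have hM : ∀ n : ℕ, K ≤ n → (∑ k ∈ Finset.Icc (K+1) n, (m k : ℝ)) ≤ η / c n := by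
      intro n hn
      obtain ⟨⟨-, hc2, hc3⟩, hc4, hc5⟩ := hK n hn
      set tn := t.filter (fun p => g p ≤ n) with htndef
      have hsplit : (∑ k ∈ Finset.Icc (K+1) n, (m k : ℝ)) = (tn.card : ℝ) := by
        have hmapn : ∀ p ∈ tn, g p ∈ Finset.Icc (K+1) n := fun p hp => by
          rw [htndef, Finset.mem_filter] at hp
          exact Finset.mem_Icc.mpr ⟨hgK p hp.1, hp.2⟩
        have h1 := Finset.card_eq_sum_card_fiberwise hmapn
        have h2 : ∀ k ∈ Finset.Icc (K+1) n,
            (tn.filter (fun p => g p = k)) = (t.filter (fun p => g p = k)) := by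
          intro k hk
          rw [htndef, Finset.filter_filter]
          apply Finset.filter_congr
          intro p _
          have hkn : k ≤ n := (Finset.mem_Icc.mp hk).2
          constructor
          · rintro ⟨-, h⟩; exact h
          · intro h; exact ⟨h ▸ hkn, h⟩
        rw [h1]
        push_cast
        refine Finset.sum_congr rfl fun k hk => ?_
        rw [h2 k hk]
      -- separation of centers of big balls
      set δn : ℝ := (2:ℝ)^(-((n:ℝ)+2)) with hδndef
      have hδn0 : 0 < δn := Real.rpow_pos_of_pos two_pos _
      have hδn1 : δn < 1 := by
        apply Real.rpow_lt_one_of_one_lt_of_neg one_lt_two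
        have : (0:ℝ) ≤ (n:ℝ) := Nat.cast_nonneg n
        linarith
      have hsβδn : 0 < s β δn := hs.1 β hβ δn ⟨hδn0, hδn1⟩
      have hinj : Set.InjOn (Prod.fst : X × ℝ → X) (↑tn : Set (X × ℝ)) := by
        intro p hp q hq hpq
        by_contra hne
        have hpt : p ∈ t := (Finset.mem_filter.mp (Finset.mem_coe.mp hp)).1
        have hqt : q ∈ t := (Finset.mem_filter.mp (Finset.mem_coe.mp hq)).1
        have hdisj := ht.2 (Finset.mem_coe.mpr hpt) (Finset.mem_coe.mpr hqt) hne
        simp only [Set.disjoint_left] at hdisj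
        refine hdisj ⟨mem_ball_self (hrad p hpt).1, (ht.1 p hpt).1⟩
          ⟨?_, (ht.1 p hpt).1⟩
        rw [hpq]
        exact mem_ball_self (hrad q hqt).1
      set u := tn.image Prod.fst with hudef
      have hcardu : u.card = tn.card := Finset.card_image_of_injOn hinj
      have husub : ↑u ⊆ E := by
        intro x hx
        rw [hudef] at hx
        simp only [Finset.coe_image, Set.mem_image, Finset.mem_coe] at hx
        obtain ⟨p, hp, rfl⟩ := hx
        exact (ht.1 p (Finset.mem_filter.mp hp).1).1
      have husep : ∀ x ∈ u, ∀ y ∈ u, x ≠ y → 2*δn ≤ dist x y := by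
        intro x hx y hy hxy
        obtain ⟨p, hp, rfl⟩ := Finset.mem_image.mp hx
        obtain ⟨q, hq, rfl⟩ := Finset.mem_image.mp hy
        have hpt : p ∈ t := (Finset.mem_filter.mp hp).1
        have hqt : q ∈ t := (Finset.mem_filter.mp hq).1
        have hqn : g q ≤ n := (Finset.mem_filter.mp hq).2
        have hne : p ≠ q := fun h => hxy (by rw [h])
        have hdisj := ht.2 (Finset.mem_coe.mpr hpt) (Finset.mem_coe.mpr hqt) hne
        simp only [Set.disjoint_left] at hdisj
        have h1 : p.1 ∉ ball q.1 q.2 := by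
          intro hmem
          exact hdisj ⟨mem_ball_self (hrad p hpt).1, (ht.1 p hpt).1⟩
            ⟨hmem, (ht.1 p hpt).1⟩
        have h2 : q.2 ≤ dist p.1 q.1 := not_lt.mp (fun hcon => h1 (mem_ball.mpr hcon))
        have h3 : (2:ℝ)^(-((g q):ℝ)-1) < q.2 := (hdy q hqt).1
        have h4 : (2:ℝ)^(-(n:ℝ)-1) ≤ (2:ℝ)^(-((g q):ℝ)-1) := by
          apply Real.rpow_le_rpow_of_exponent_le one_le_two
          have : ((g q):ℝ) ≤ (n:ℝ) := by exact_mod_cast hqn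
          linarith
        have h5 : 2*δn = (2:ℝ)^(-(n:ℝ)-1) := by
          rw [hδndef]
          rw [show (2:ℝ) * (2:ℝ)^(-((n:ℝ)+2)) = (2:ℝ)^(1:ℝ) * (2:ℝ)^(-((n:ℝ)+2)) by
            rw [Real.rpow_one]]
          rw [← Real.rpow_add two_pos]
          ring_nf
        rw [h5]
        linarith
      have hcard1 : (tn.card : ℝ≥0∞) ≤ coveringNumber E δn := by
        rw [← hcardu]
        exact_mod_cast psc_sep_card_le_cov husub husep
      have hcovb := hδ₁ δn hδn0 hc3
      have hw0 : ENNReal.ofReal (s β δn) ≠ 0 := by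
        simp only [ne_eq, ENNReal.ofReal_eq_zero, not_le]; exact hsβδn
      have hcard2 : (tn.card : ℝ) ≤ (s β δn)⁻¹ := by
        have h6 : (tn.card : ℝ≥0∞) ≤ 1 / ENNReal.ofReal (s β δn) := by
          refine le_trans hcard1 ?_
          rw [ENNReal.le_div_iff_mul_le (Or.inl hw0) (Or.inl ENNReal.ofReal_ne_top)]
          exact hcovb
        rw [one_div, ← ENNReal.ofReal_inv_of_pos hsβδn, ← ENNReal.ofReal_natCast,
          ENNReal.ofReal_le_ofReal_iff (inv_nonneg.mpr hsβδn.le)] at h6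
        exact h6
      have hstep : c n ≤ η * s β δn := by
        set un : ℝ := (2:ℝ)^(-(((n:ℝ)+2)/l)) with hundef
        have hun0 : 0 < un := Real.rpow_pos_of_pos two_pos _
        have hun1 : un < 1 := by
          apply Real.rpow_lt_one_of_one_lt_of_neg one_lt_two
          have h0n : (0:ℝ) ≤ (n:ℝ) := Nat.cast_nonneg n
          have : 0 < ((n:ℝ)+2)/l := by positivity
          linarith
        have hunl : un ^ l = δn := by
          rw [hundef, hδndef, ← Real.rpow_mul two_pos.le]
          congr 1
          field_simp
        have h7 := hδ₃ un hun0 hc2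
        have h8 : s γ un < η * s β (un ^ l) := by
          rw [div_lt_iff₀ (by rw [hunl]; exact hsβδn)] at h7
          linarith
        have h9 : c n ≤ s γ un := by
          apply hs.2.1 γ hγ0 ⟨hD0 n, hD1 n hc5⟩ ⟨hun0, hun1⟩
          apply Real.rpow_le_rpow_of_exponent_le one_le_two
          linarith
        rw [hunl] at h8
        linarith
      have hfinal : (s β δn)⁻¹ ≤ η / c n := by
        rw [inv_eq_one_div, div_le_div_iff₀ hsβδn (hc_pos n hc5)]
        linarith [hstep]
      rw [hsplit]
      exact le_trans hcard2 hfinal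
    -- step 3 : apply the core Abel-summation estimate
    have hc' : ∀ k, K ≤ k → 0 < c k := fun k hk => hc_pos k (le_trans hK1 hk)
    have hcm' : ∀ k, K ≤ k → c (k+1) ≤ c k := by
      intro k hk
      have hk1 : 1 ≤ k := le_trans hK1 hk
      apply hs.2.1 γ hγ0 ⟨hD0 (k+1), hD1 (k+1) (by omega)⟩ ⟨hD0 k, hD1 k hk1⟩
      apply Real.rpow_le_rpow_of_exponent_le one_le_two
      push_cast
      linarith
    have ha0' : ∀ k, K ≤ k → 0 ≤ a k := fun k hk => (ha_pos k (le_trans hK1 hk)).le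
    have ham' : ∀ k, K ≤ k → a (k+1) ≤ a k := by
      intro k hk
      have hk1 : 1 ≤ k := le_trans hK1 hk
      apply hs.2.1 α hα ⟨hD0 (k+1), hD1 (k+1) (by omega)⟩ ⟨hD0 k, hD1 k hk1⟩
      apply Real.rpow_le_rpow_of_exponent_le one_le_two
      push_cast
      linarith
    have hac' : ∀ k, K + 1 ≤ k → a k ≤ η * c k ^ (1+θ) := by
      intro k hk
      have hkK : K ≤ k := by omega
      have hk1 : 1 ≤ k := by omega
      have hx := (hK k hkK).1.1
      have h7 := hδ₂ _ (hD0 k) hx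
      have hcl : (0:ℝ) < c k ^ l := Real.rpow_pos_of_pos (hc_pos k hk1) l
      rw [div_lt_iff₀ hcl] at h7
      rw [show (1:ℝ) + θ = l by rw [hθdef]; ring]
      exact h7.le.trans (by rw [mul_comm])
    have hcore := psc_core θ η hθ0 hθ1 hη0.le K a c m hc' hcm' ha0' ham' hac' hM K' hKK'
    -- step 4 : the final numeric bound
    have hcK : c K ^ θ ≤ (s γ (1/2)) ^ θ := by
      apply Real.rpow_le_rpow (hc_pos K hK1).le ?_ hθ0.le
      have h2K : (2:ℝ)^(-(K:ℝ)) ≤ 1/2 := by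
        rw [show (1/2:ℝ) = (2:ℝ)^(-(1:ℝ)) by rw [Real.rpow_neg_one]; norm_num]
        apply Real.rpow_le_rpow_of_exponent_le one_le_two
        have : (1:ℝ) ≤ (K:ℝ) := by exact_mod_cast hK1
        linarith
      exact hs.2.1 γ hγ0 ⟨hD0 K, hD1 K hK1⟩ ⟨by norm_num, by norm_num⟩ h2K
    have hreal : ∑ k ∈ Finset.Icc (K+1) K', (m k:ℝ) * a k ≤ η' := by
      refine le_trans hcore ?_
      have hfrac : (0:ℝ) < 1 + 1/θ := by positivity
      have h1 : η^2 * c K ^ θ * (1 + 1/θ) ≤ η^2 * (s γ (1/2)) ^ θ * (1 + 1/θ) := by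
        apply mul_le_mul_of_nonneg_right ?_ hfrac.le
        exact mul_le_mul_of_nonneg_left hcK (sq_nonneg η)
      have h2 : η^2 * (s γ (1/2)) ^ θ * (1 + 1/θ) = η^2 * Cst := by
        rw [hCstdef]; ring
      have h3 : η * (Cst + 1) ≤ η' := by
        rw [← le_div_iff₀ (by positivity : (0:ℝ) < Cst + 1)]
        exact hη2
      have h4 : η^2 * Cst ≤ η * Cst := by
        have := mul_le_mul_of_nonneg_right hη1 (mul_nonneg hη0.le hCst.le)
        calc η^2 * Cst = η * (η * Cst) := by ring
          _ ≤ 1 * (η * Cst) := this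
          _ = η * Cst := by ring
      have h5 : η * Cst ≤ η * (Cst + 1) :=
        mul_le_mul_of_nonneg_left (by linarith) hη0.le
      linarith
    calc ∑ p ∈ t, ENNReal.ofReal (s α p.2)
        ≤ ENNReal.ofReal (∑ k ∈ Finset.Icc (K+1) K', (m k : ℝ) * a k) := step1
      _ ≤ ENNReal.ofReal η' := ENNReal.ofReal_le_ofReal hreal
  apply ENNReal.le_of_forall_pos_le_add
  intro ζ hζ _
  rw [zero_add]
  have h := key (ζ:ℝ) (by exact_mod_cast hζ)
  rwa [ENNReal.ofReal_coe_nnreal] at h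


/-- If the packing scale is `< α`, then the packing measure for gauge `s α` vanishes. -/
lemma psc_L1full {X : Type*} [MetricSpace X] (s : ℝ → ℝ → ℝ) (hs : IsScaling s) {α : ℝ}
    (hα : 0 < α) (h : packingScale s (Set.univ : Set X) < ENNReal.ofReal α) :
    packingMeasureOf (s α) (Set.univ : Set X) = 0 := by
  rw [packingScale] at h
  obtain ⟨F, hF1⟩ := iInf_lt_iff.mp h
  obtain ⟨hF, hsup⟩ := iInf_lt_iff.mp hF1
  have hzero : ∀ n, packingPre0 (s α) (F n) = 0 := by
    intro n
    have hb : upperBoxScale s (F n) < ENNReal.ofReal α :=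
      lt_of_le_of_lt (le_iSup (fun n => upperBoxScale s (F n)) n) hsup
    rw [upperBoxScale] at hb
    obtain ⟨β, hβ1⟩ := iInf_lt_iff.mp hb
    obtain ⟨⟨hβ0, hβt⟩, hβα⟩ := iInf_lt_iff.mp hβ1
    have hβα' : β < α := (ENNReal.ofReal_lt_ofReal_iff hα).mp hβα
    exact psc_L1 s hs hβ0 hβα' (F n) hβt
  have hle : packingMeasureOf (s α) (Set.univ : Set X) ≤ ∑' n, packingPre0 (s α) (F n) :=
    iInf_le_of_le F (iInf_le_of_le hF le_rfl)
  simp only [hzero, tsum_zero] at hle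
  exact le_antisymm hle zero_le

/-- Characterization of the packing scale via the packing measure:
`sup {α > 0 : P^{scl_α}(X) = ∞} = scl_P X = inf {α > 0 : P^{scl_α}(X) = 0}`. -/
theorem packingScale_eq_packingMeasure_char
    {X : Type*} [MetricSpace X] (s : ℝ → ℝ → ℝ) (hs : IsScaling s) :
    (⨆ (α : ℝ) (_ : 0 < α ∧ packingMeasureOf (s α) (Set.univ : Set X) = ⊤),
        ENNReal.ofReal α) = packingScale s (Set.univ : Set X) ∧
    packingScale s (Set.univ : Set X) =
      (⨅ (α : ℝ) (_ : 0 < α ∧ packingMeasureOf (s α) (Set.univ : Set X) = 0),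
        ENNReal.ofReal α) := by
  constructor
  · -- sup {α : P^{s α} = ⊤} = packing scale
    apply le_antisymm
    · apply iSup_le
      intro α
      apply iSup_le
      rintro ⟨hα, hP⟩
      by_contra hcon
      push_neg at hcon
      have h0 := psc_L1full s hs hα hcon
      rw [h0] at hP
      exact ENNReal.zero_ne_top hP
    · by_contra hcon
      push_neg at hcon
      obtain ⟨r, -, hsr, hrD⟩ := ENNReal.lt_iff_exists_real_btwn.mp hcon
      have hrpos : 0 < r :=
        ENNReal.ofReal_pos.mp (lt_of_le_of_lt zero_le hsr)
      have hPr : packingMeasureOf (s r) (Set.univ : Set X) = ⊤ := by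
        by_contra hne
        exact (not_lt.mpr (psc_L2 s hs hrpos hne)) hrD
      have hle : ENNReal.ofReal r ≤
          (⨆ (α : ℝ) (_ : 0 < α ∧ packingMeasureOf (s α) (Set.univ : Set X) = ⊤),
            ENNReal.ofReal α) :=
        le_iSup_of_le r (le_iSup_of_le ⟨hrpos, hPr⟩ le_rfl)
      exact (not_lt.mpr hle) hsr
  · -- packing scale = inf {α : P^{s α} = 0}
    apply le_antisymm
    · apply le_iInf
      intro α
      apply le_iInf
      rintro ⟨hα, hP⟩
      exact psc_L2 s hs hα (by rw [hP]; exact ENNReal.zero_ne_top)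
    · by_contra hcon
      push_neg at hcon
      obtain ⟨r, -, hDr, hri⟩ := ENNReal.lt_iff_exists_real_btwn.mp hcon
      have hrpos : 0 < r :=
        ENNReal.ofReal_pos.mp (lt_of_le_of_lt zero_le hDr)
      have hPr : packingMeasureOf (s r) (Set.univ : Set X) = 0 :=
        psc_L1full s hs hrpos hDr
      have hle : (⨅ (α : ℝ) (_ : 0 < α ∧ packingMeasureOf (s α) (Set.univ : Set X) = 0),
          ENNReal.ofReal α) ≤ ENNReal.ofReal r :=
        iInf_le_of_le r (iInf_le_of_le ⟨hrpos, hPr⟩ le_rfl)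
      exact (not_lt.mpr hle) hri

end
end

section
/- Let (X,d) be a metric space, scl a scaling, and E ⊆ X. Then sup{α > 0 : P_0^{scl_α}(E) = +∞} = upper-scl_B E = inf{α > 0 : P_0^{scl_α}(E) = 0} (with sup ∅ = 0 and inf ∅ = +∞), where P_0^φ denotes the packing pre-measure. -/
open Filter MeasureTheory Metric Set
open scoped ENNReal Topology NNReal

noncomputable section

section Aux

open Filter

variable {X : Type*} [MetricSpace X]

/-- A finite `r`-separated subset of `E` has cardinality at most `N_{r/2}(E)`. -/
lemma sep_card_le_coveringNumber (E : Set X) {r : ℝ} (S : Finset X) (hSE : (↑S : Set X) ⊆ E)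
    (hsep : ∀ x ∈ S, ∀ y ∈ S, x ≠ y → r ≤ dist x y) :
    (S.card : ℝ≥0∞) ≤ coveringNumber E (r / 2) := by
  refine le_iInf fun u => le_iInf fun hu => ?_
  obtain ⟨huE, hucov⟩ := hu
  have hchoice : ∀ x : X, ∃ c : X, x ∈ S → c ∈ u ∧ x ∈ ball c (r / 2) := by
    intro x
    by_cases hx : x ∈ S
    · have := hucov (hSE hx)
      simp only [Set.mem_iUnion] at this
      obtain ⟨c, hc, hxc⟩ := this
      exact ⟨c, fun _ => ⟨hc, hxc⟩⟩
    · exact ⟨x, fun h => absurd h hx⟩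
  choose f hf using hchoice
  have : S.card ≤ u.card := by
    refine Finset.card_le_card_of_injOn f (fun x hx => (hf x hx).1) ?_
    intro x hx y hy hxy
    by_contra hne
    have h1 := (hf x (by simpa using hx)).2
    have h2 := (hf y (by simpa using hy)).2
    have hd := hsep x (by simpa using hx) y (by simpa using hy) hne
    rw [mem_ball] at h1 h2
    have : dist x y < r := by
      calc dist x y ≤ dist x (f x) + dist y (f y) := by
            rw [hxy]; exact dist_triangle_right x y (f y)
        _ < r / 2 + r / 2 := by linarith
        _ = r := by ring
    linarith
  exact_mod_cast this

/-- If `m ≤ N_r(E)` then there is an `r`-separated subset of `E` of cardinality at least `m`. -/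
lemma exists_separated_of_le_coveringNumber (E : Set X) {r : ℝ} (hr : 0 < r) (m : ℕ)
    (h : (m : ℝ≥0∞) ≤ coveringNumber E r) :
    ∃ S : Finset X, (↑S : Set X) ⊆ E ∧ (∀ x ∈ S, ∀ y ∈ S, x ≠ y → r ≤ dist x y) ∧ m ≤ S.card := by
  classical
  by_contra hcon
  push_neg at hcon
  set A : Set ℕ := {k : ℕ | ∃ S : Finset X, (↑S : Set X) ⊆ E ∧
    (∀ x ∈ S, ∀ y ∈ S, x ≠ y → r ≤ dist x y) ∧ S.card = k} with hA
  have hA0 : (0 : ℕ) ∈ A := ⟨∅, by simp⟩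
  have hAbdd : BddAbove A := by
    refine ⟨m, fun k hk => ?_⟩
    obtain ⟨S, h1, h2, h3⟩ := hk
    have := hcon S h1 h2
    omega
  have hmem := Nat.sSup_mem ⟨0, hA0⟩ hAbdd
  obtain ⟨S, hSE, hSsep, hScard⟩ := hmem
  have hcov : E ⊆ ⋃ x ∈ S, ball x r := by
    intro y hy
    by_contra hyn
    simp only [Set.mem_iUnion, exists_prop, not_exists, not_and] at hyn
    have hyS : y ∉ S := fun hyS => hyn y hyS (mem_ball_self hr)
    have hyd : ∀ x ∈ S, r ≤ dist y x := by
      intro x hx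
      have hnb := hyn x hx
      rw [mem_ball] at hnb
      push_neg at hnb
      exact hnb
    have hsep' : ∀ x ∈ insert y S, ∀ z ∈ insert y S, x ≠ z → r ≤ dist x z := by
      intro a ha b hb hab
      obtain ha' | ha' := Finset.mem_insert.1 ha
      · obtain hb' | hb' := Finset.mem_insert.1 hb
        · exact absurd (ha'.trans hb'.symm) hab
        · rw [ha']
          exact hyd b hb'
      · obtain hb' | hb' := Finset.mem_insert.1 hb
        · rw [hb', dist_comm]
          exact hyd a ha'
        · exact hSsep a ha' b hb' hab
    have hins : (↑(insert y S) : Set X) ⊆ E := by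
      intro z hz
      simp only [Finset.coe_insert, Set.mem_insert_iff] at hz
      rcases hz with rfl | hz
      · exact hy
      · exact hSE hz
    have : S.card + 1 ∈ A := ⟨insert y S, hins, hsep', by rw [Finset.card_insert_of_notMem hyS]⟩
    have hle := le_csSup hAbdd this
    omega
  have hN : coveringNumber E r ≤ (S.card : ℝ≥0∞) := by
    refine iInf_le_of_le S (iInf_le_of_le ⟨hSE, hcov⟩ le_rfl)
  have hlt := hcon S hSE hSsep
  have : (m : ℝ≥0∞) ≤ (S.card : ℝ≥0∞) := le_trans h hN
  have : m ≤ S.card := by exact_mod_cast this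
  omega

/-- The covering number is either a natural number or infinite. -/
lemma coveringNumber_eq_natCast_or_top (E : Set X) (η : ℝ) :
    (∃ n : ℕ, coveringNumber E η = n) ∨ coveringNumber E η = ⊤ := by
  set A : Set ℕ := {n : ℕ | ∃ u : Finset X, ((↑u : Set X) ⊆ E ∧ E ⊆ ⋃ x ∈ u, ball x η) ∧
    u.card = n} with hA
  rcases Set.eq_empty_or_nonempty A with hemp | hne
  · right
    rw [_root_.coveringNumber, iInf_eq_top]
    intro u
    rw [iInf_eq_top]
    intro hu
    exfalso
    exact Set.eq_empty_iff_forall_notMem.1 hemp u.card ⟨u, hu, rfl⟩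
  · left
    refine ⟨sInf A, le_antisymm ?_ ?_⟩
    · obtain ⟨u, hu, hcard⟩ := Nat.sInf_mem hne
      exact iInf_le_of_le u (iInf_le_of_le hu (by rw [hcard]))
    · refine le_iInf fun u => le_iInf fun hu => ?_
      have : sInf A ≤ u.card := Nat.sInf_le ⟨u, hu, rfl⟩
      exact_mod_cast this

/-- Rearrangement: summing an antitone function of the "rank" of each element. -/
lemma sum_rank_le {ι : Type*} [DecidableEq ι] (g : ℕ → ℝ≥0∞)
    (hg : ∀ a b : ℕ, 1 ≤ a → a ≤ b → g b ≤ g a) (w : ι → ℝ) :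
    ∀ (n : ℕ) (t : Finset ι), t.card = n →
      (∑ p ∈ t, g ((t.filter fun q => w p ≤ w q).card)) ≤ ∑ k ∈ Finset.Icc 1 n, g k := by
  intro n
  induction n with
  | zero =>
    intro t ht
    rw [Finset.card_eq_zero] at ht
    subst ht
    simp
  | succ n ih =>
    intro t ht
    have hne : t.Nonempty := by
      rw [← Finset.card_pos, ht]; omega
    obtain ⟨p₀, hp₀t, hp₀min⟩ := Finset.exists_min_image t w hne
    have hfilt : (t.filter fun q => w p₀ ≤ w q) = t := by
      apply Finset.filter_true_of_mem
      intro q hq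
      exact hp₀min q hq
    have hsum : (∑ p ∈ t, g ((t.filter fun q => w p ≤ w q).card)) =
        (∑ p ∈ t.erase p₀, g ((t.filter fun q => w p ≤ w q).card)) +
          g ((t.filter fun q => w p₀ ≤ w q).card) := by
      rw [Finset.sum_erase_add t _ hp₀t]
    rw [hsum, hfilt, ht]
    have hstep : (∑ p ∈ t.erase p₀, g ((t.filter fun q => w p ≤ w q).card)) ≤
        ∑ p ∈ t.erase p₀, g (((t.erase p₀).filter fun q => w p ≤ w q).card) := by
      refine Finset.sum_le_sum fun p hp => ?_
      refine hg _ _ ?_ ?_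
      · rw [Nat.one_le_iff_ne_zero, ← Nat.pos_iff_ne_zero, Finset.card_pos]
        exact ⟨p, Finset.mem_filter.2 ⟨hp, le_rfl⟩⟩
      · exact Finset.card_le_card (Finset.filter_subset_filter _ (Finset.erase_subset p₀ t))
    have hih := ih (t.erase p₀) (by simp [Finset.card_erase_of_mem hp₀t, ht])
    rw [Finset.sum_Icc_succ_top (by omega : 1 ≤ n + 1)]
    calc (∑ p ∈ t.erase p₀, g ((t.filter fun q => w p ≤ w q).card)) + g (n + 1)
        ≤ (∑ p ∈ t.erase p₀, g (((t.erase p₀).filter fun q => w p ≤ w q).card)) + g (n + 1) :=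
          add_le_add_left hstep _
      _ ≤ (∑ k ∈ Finset.Icc 1 n, g k) + g (n + 1) := add_le_add_left hih _

end Aux

section Scal

open Filter

lemma eventually_Ioo {a : ℝ} (ha : 0 < a) : ∀ᶠ ε in 𝓝[>] (0:ℝ), ε ∈ Set.Ioo (0:ℝ) a :=
  Ioo_mem_nhdsGT_of_mem ⟨le_refl 0, ha⟩

lemma eventually_rpow_le {l c : ℝ} (hl : 1 < l) (hc : 0 < c) :
    ∀ᶠ ε in 𝓝[>] (0:ℝ), ε ^ l ≤ c * ε := by
  have hl1 : 0 < l - 1 := by linarith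
  set ε₀ : ℝ := c ^ (1 / (l - 1)) with hε₀
  have hε₀pos : 0 < ε₀ := Real.rpow_pos_of_pos hc _
  filter_upwards [eventually_Ioo hε₀pos] with ε hε
  obtain ⟨hε1, hε2⟩ := hε
  have h1 : ε ^ l = ε * ε ^ (l - 1) := by
    rw [show l = 1 + (l - 1) by ring, Real.rpow_add hε1, Real.rpow_one]
    norm_num
  have h2 : ε ^ (l - 1) ≤ ε₀ ^ (l - 1) :=
    Real.rpow_le_rpow hε1.le hε2.le hl1.le
  have h3 : ε₀ ^ (l - 1) = c := by
    rw [hε₀, ← Real.rpow_mul hc.le, one_div_mul_cancel (by linarith), Real.rpow_one]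
  calc ε ^ l = ε * ε ^ (l - 1) := h1
    _ ≤ ε * c := by nlinarith
    _ = c * ε := by ring

/-- Key upper scaling estimate: for `0 < γ < α` there is `l₁ > 1` with
`s α ε ≤ (s γ (ε/2)) ^ l₁` for all small `ε > 0`. -/
lemma scaling_upper {s : ℝ → ℝ → ℝ} (hs : IsScaling s) {γ α : ℝ} (hγ : 0 < γ) (hγα : γ < α) :
    ∃ l₁ : ℝ, 1 < l₁ ∧ ∀ᶠ ε in 𝓝[>] (0:ℝ), s α ε ≤ (s γ (ε / 2)) ^ l₁ := by
  set β : ℝ := (γ + α) / 2 with hβ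
  have hβpos : 0 < β := by rw [hβ]; linarith
  have hγβ : γ < β := by rw [hβ]; linarith
  have hβα : β < α := by rw [hβ]; linarith
  obtain ⟨l₀, hl₀, h₀⟩ := hs.2.2 α β hβpos hβα
  set l₁ : ℝ := (1 + l₀) / 2 with hl₁def
  have hl₁ : 1 < l₁ := by rw [hl₁def]; linarith
  have hl₁' : l₁ < l₀ := by rw [hl₁def]; linarith
  have h₁div := (h₀ l₁ ⟨hl₁, hl₁'⟩).2
  obtain ⟨l₀', hl₀', h₀'⟩ := hs.2.2 β γ hγ hγβ
  set l : ℝ := (1 + l₀') / 2 with hldef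
  have hl : 1 < l := by rw [hldef]; linarith
  have hl' : l < l₀' := by rw [hldef]; linarith
  have h₂div := (h₀' l ⟨hl, hl'⟩).1
  refine ⟨l₁, hl₁, ?_⟩
  have ev1 : ∀ᶠ ε in 𝓝[>] (0:ℝ), s α ε / (s β ε) ^ l₁ < 1 :=
    h₁div.eventually_lt_const one_pos
  have ev2 : ∀ᶠ ε in 𝓝[>] (0:ℝ), s β ε / s γ (ε ^ l) < 1 :=
    h₂div.eventually_lt_const one_pos
  have ev3 := eventually_rpow_le hl (by norm_num : (0:ℝ) < 1/2)
  filter_upwards [ev1, ev2, ev3, eventually_Ioo one_pos] with ε h1 h2 h3 h4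
  obtain ⟨hε0, hε1⟩ := h4
  have hεl_mem : ε ^ l ∈ Set.Ioo (0:ℝ) 1 := by
    constructor
    · exact Real.rpow_pos_of_pos hε0 _
    · calc ε ^ l ≤ 1/2 * ε := h3
        _ < 1 := by linarith
  have hε2_mem : ε / 2 ∈ Set.Ioo (0:ℝ) 1 := ⟨by linarith, by linarith⟩
  have hβval : 0 < s β ε := hs.1 β hβpos ε ⟨hε0, hε1⟩
  have hγval : 0 < s γ (ε ^ l) := hs.1 γ hγ _ hεl_mem
  have hαβ : s α ε ≤ (s β ε) ^ l₁ := by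
    have hp : 0 < (s β ε) ^ l₁ := Real.rpow_pos_of_pos hβval _
    have := (div_lt_one hp).1 h1
    linarith
  have hβγ : s β ε ≤ s γ (ε ^ l) := by
    have := (div_lt_one hγval).1 h2
    linarith
  have hmono : s γ (ε ^ l) ≤ s γ (ε / 2) :=
    hs.2.1 γ hγ hεl_mem hε2_mem (by linarith [h3])
  calc s α ε ≤ (s β ε) ^ l₁ := hαβ
    _ ≤ (s γ (ε / 2)) ^ l₁ := Real.rpow_le_rpow hβval.le (by linarith) (by linarith)

/-- Key lower scaling estimate: for `0 < α < α'` and `c > 0`,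
`s α' ε ≤ c * s α (ε/3)` for all small `ε > 0`. -/
lemma scaling_lower {s : ℝ → ℝ → ℝ} (hs : IsScaling s) {α α' : ℝ} (hα : 0 < α) (hαα' : α < α')
    {c : ℝ} (hc : 0 < c) :
    ∀ᶠ ε in 𝓝[>] (0:ℝ), 0 < s α (ε / 3) ∧ s α' ε ≤ c * s α (ε / 3) := by
  obtain ⟨l₀, hl₀, h₀⟩ := hs.2.2 α' α hα hαα'
  set l : ℝ := (1 + l₀) / 2 with hldef
  have hl : 1 < l := by rw [hldef]; linarith
  have hl' : l < l₀ := by rw [hldef]; linarith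
  have hdiv := (h₀ l ⟨hl, hl'⟩).1
  have ev1 : ∀ᶠ ε in 𝓝[>] (0:ℝ), s α' ε / s α (ε ^ l) < c :=
    hdiv.eventually_lt_const hc
  have ev3 := eventually_rpow_le hl (by norm_num : (0:ℝ) < 1/3)
  filter_upwards [ev1, ev3, eventually_Ioo one_pos] with ε h1 h3 h4
  obtain ⟨hε0, hε1⟩ := h4
  have hεl_mem : ε ^ l ∈ Set.Ioo (0:ℝ) 1 := by
    constructor
    · exact Real.rpow_pos_of_pos hε0 _
    · calc ε ^ l ≤ 1/3 * ε := h3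
        _ < 1 := by linarith
  have hε3_mem : ε / 3 ∈ Set.Ioo (0:ℝ) 1 := ⟨by linarith, by linarith⟩
  have hαval : 0 < s α (ε ^ l) := hs.1 α hα _ hεl_mem
  have hα3val : 0 < s α (ε / 3) := hs.1 α hα _ hε3_mem
  refine ⟨hα3val, ?_⟩
  have h5 : s α' ε < c * s α (ε ^ l) := (div_lt_iff₀ hαval).1 h1
  have hmono : s α (ε ^ l) ≤ s α (ε / 3) :=
    hs.2.1 α hα hεl_mem hε3_mem (by linarith [h3])
  nlinarith

end Scal



section Claims

open Filter

variable {X : Type*} [MetricSpace X]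

/-- If `α` exceeds the upper box scale, the packing pre-measure vanishes. -/
lemma claimA {s : ℝ → ℝ → ℝ} (hs : IsScaling s) (E : Set X) {α : ℝ} (hα : 0 < α)
    (h : upperBoxScale s E < ENNReal.ofReal α) : packingPre0 (s α) E = 0 := by
  classical
  simp only [upperBoxScale, iInf_lt_iff] at h
  obtain ⟨γ, ⟨hγpos, hγtend⟩, hγα⟩ := h
  have hγα' : γ < α := (ENNReal.ofReal_lt_ofReal_iff hα).1 hγα
  obtain ⟨l₁, hl₁, hevA⟩ := scaling_upper hs hγpos hγα'
  set C : ℝ := ∑' k : ℕ, ((k : ℝ) ^ l₁)⁻¹ with hCdef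
  have hCsum : Summable (fun k : ℕ => ((k : ℝ) ^ l₁)⁻¹) := Real.summable_nat_rpow_inv.2 hl₁
  have hCnn : 0 ≤ C := tsum_nonneg fun k => by positivity
  -- main estimate
  have main : ∀ δ : ℝ, 0 < δ → packingPre0 (s α) E ≤ ENNReal.ofReal (δ ^ l₁ * C) := by
    intro δ hδ
    have ev0 : ∀ᶠ η in 𝓝[>] (0:ℝ),
        coveringNumber E η * ENNReal.ofReal (s γ η) ≤ ENNReal.ofReal δ :=
      ENNReal.tendsto_nhds_zero.1 hγtend (ENNReal.ofReal δ) (ENNReal.ofReal_pos.2 hδ)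
    obtain ⟨u, hu, hsub⟩ := mem_nhdsGT_iff_exists_Ioo_subset.1 ev0
    obtain ⟨u', hu', hsub'⟩ := mem_nhdsGT_iff_exists_Ioo_subset.1
      (hevA.and (eventually_Ioo one_pos))
    set ε₂ : ℝ := min u u' with hε₂def
    have hε₂pos : 0 < ε₂ := lt_min hu hu'
    have hstep : packingPre (s α) E (ε₂ / 2) ≤ ENNReal.ofReal (δ ^ l₁ * C) := by
      refine iSup_le fun t => iSup_le fun ht => ?_
      obtain ⟨hmem, hdisj⟩ := ht
      -- separation of centers
      have hsepd : ∀ p ∈ t, ∀ q ∈ t, p ≠ q → p.2 ≤ dist p.1 q.1 := by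
        intro p hp q hq hpq
        have hd := hdisj (Finset.mem_coe.2 hp) (Finset.mem_coe.2 hq) hpq
        have hq1 : q.1 ∈ ball q.1 q.2 ∩ E :=
          ⟨mem_ball_self (hmem q hq).2.1, (hmem q hq).1⟩
        have : q.1 ∉ ball p.1 p.2 ∩ E := fun hmem' => Set.disjoint_left.1 hd hmem' hq1
        have : q.1 ∉ ball p.1 p.2 := fun hb => this ⟨hb, (hmem q hq).1⟩
        rw [mem_ball] at this
        push_neg at this
        rwa [dist_comm] at this
      have hfst : ∀ p ∈ t, ∀ q ∈ t, p ≠ q → p.1 ≠ q.1 := by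
        intro p hp q hq hpq heq
        have := hsepd p hp q hq hpq
        rw [heq, dist_self] at this
        exact absurd this (not_le.2 (hmem p hp).2.1)
      set g : ℕ → ℝ≥0∞ := fun k => ENNReal.ofReal ((δ / k) ^ l₁) with hgdef
      have key : ∀ p ∈ t, ENNReal.ofReal (s α p.2) ≤
          g ((t.filter fun q => p.2 ≤ q.2).card) := by
        intro p hp
        set r : ℝ := p.2 with hrdef
        have hrIoc := (hmem p hp).2
        have hrpos : 0 < r := hrIoc.1
        have hrε₂ : r < ε₂ := lt_of_le_of_lt hrIoc.2 (by linarith)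
        have hrmem' : r ∈ Set.Ioo (0:ℝ) u' := ⟨hrpos, lt_of_lt_of_le hrε₂ (min_le_right _ _)⟩
        obtain ⟨hA, hr0, hr1⟩ := hsub' hrmem'
        have hr2mem : r / 2 ∈ Set.Ioo (0:ℝ) u :=
          ⟨by linarith, by
            have : r < u := lt_of_lt_of_le hrε₂ (min_le_left _ _)
            linarith⟩
        have hbound := hsub hr2mem
        set m : ℕ := (t.filter fun q : X × ℝ => p.2 ≤ q.2).card with hmdef
        have hm1 : 1 ≤ m := by
          rw [hmdef, Nat.one_le_iff_ne_zero, ← Nat.pos_iff_ne_zero, Finset.card_pos]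
          exact ⟨p, Finset.mem_filter.2 ⟨hp, le_rfl⟩⟩
        -- the separated set of centers
        set S : Finset X := (t.filter fun q : X × ℝ => p.2 ≤ q.2).image Prod.fst with hSdef
        have hScard : S.card = m := by
          rw [hSdef, hmdef]
          apply Finset.card_image_of_injOn
          intro a ha b hb hab
          by_contra hne
          exact hfst a (Finset.mem_of_mem_filter a (Finset.mem_coe.1 ha))
            b (Finset.mem_of_mem_filter b (Finset.mem_coe.1 hb)) hne hab
        have hSE : (↑S : Set X) ⊆ E := by
          intro x hx
          simp only [hSdef, Finset.coe_image, Set.mem_image] at hx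
          obtain ⟨q, hq, rfl⟩ := hx
          exact (hmem q (Finset.mem_of_mem_filter q hq)).1
        have hSsep : ∀ x ∈ S, ∀ y ∈ S, x ≠ y → r ≤ dist x y := by
          intro x hx y hy hxy
          rw [hSdef, Finset.mem_image] at hx hy
          obtain ⟨a, ha, rfl⟩ := hx
          obtain ⟨b, hb, rfl⟩ := hy
          have hane : a ≠ b := fun hab => hxy (by rw [hab])
          have h1 := hsepd a (Finset.mem_of_mem_filter a ha) b (Finset.mem_of_mem_filter b hb) hane
          have h2 : r ≤ a.2 := (Finset.mem_filter.1 ha).2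
          linarith
        have hcov : (m : ℝ≥0∞) ≤ coveringNumber E (r / 2) := by
          rw [← hScard]
          exact sep_card_le_coveringNumber E S hSE hSsep
        have h3 : (m : ℝ≥0∞) * ENNReal.ofReal (s γ (r / 2)) ≤ ENNReal.ofReal δ :=
          le_trans (mul_le_mul_left hcov _) hbound
        have hγr2pos : 0 < s γ (r / 2) := hs.1 γ hγpos _ ⟨by linarith, by linarith⟩
        have hreal : (m : ℝ) * s γ (r / 2) ≤ δ := by
          rw [← ENNReal.ofReal_natCast m, ← ENNReal.ofReal_mul (by positivity)] at h3
          exact (ENNReal.ofReal_le_ofReal_iff hδ.le).1 h3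
        have hmpos : (0 : ℝ) < m := by exact_mod_cast hm1
        have hγle : s γ (r / 2) ≤ δ / m := by
          rw [le_div_iff₀ hmpos]
          linarith [hreal]
        have hαle : s α r ≤ (δ / m) ^ l₁ := by
          calc s α r ≤ (s γ (r / 2)) ^ l₁ := hA
            _ ≤ (δ / m) ^ l₁ := Real.rpow_le_rpow hγr2pos.le hγle (by linarith)
        exact ENNReal.ofReal_le_ofReal hαle
      have hgmono : ∀ a b : ℕ, 1 ≤ a → a ≤ b → g b ≤ g a := by
        intro a b ha hab
        apply ENNReal.ofReal_le_ofReal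
        apply Real.rpow_le_rpow (by positivity) _ (by linarith)
        apply div_le_div_of_nonneg_left hδ.le (by exact_mod_cast ha) (by exact_mod_cast hab)
      calc ∑ p ∈ t, ENNReal.ofReal (s α p.2)
          ≤ ∑ p ∈ t, g ((t.filter fun q => p.2 ≤ q.2).card) := Finset.sum_le_sum key
        _ ≤ ∑ k ∈ Finset.Icc 1 t.card, g k :=
            sum_rank_le g hgmono (fun p : X × ℝ => p.2) t.card t rfl
        _ ≤ ENNReal.ofReal (δ ^ l₁ * C) := by
            have heach : ∀ k ∈ Finset.Icc 1 t.card, (δ / (k:ℝ)) ^ l₁ =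
                δ ^ l₁ * (((k:ℝ)) ^ l₁)⁻¹ := by
              intro k hk
              have hk1 : (1:ℝ) ≤ (k:ℝ) := by
                exact_mod_cast (Finset.mem_Icc.1 hk).1
              rw [Real.div_rpow hδ.le (by linarith), div_eq_mul_inv]
            rw [hgdef, ← ENNReal.ofReal_sum_of_nonneg (fun k _ => by positivity)]
            apply ENNReal.ofReal_le_ofReal
            rw [Finset.sum_congr rfl heach, ← Finset.mul_sum]
            have hsumle : ∑ k ∈ Finset.Icc 1 t.card, (((k:ℝ)) ^ l₁)⁻¹ ≤ C :=
              Summable.sum_le_tsum _ (fun k _ => by positivity) hCsum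
            have hδl : (0:ℝ) ≤ δ ^ l₁ := by positivity
            nlinarith
    calc packingPre0 (s α) E ≤ packingPre (s α) E (ε₂ / 2) :=
          iInf₂_le _ (by linarith)
      _ ≤ ENNReal.ofReal (δ ^ l₁ * C) := hstep
  -- conclude
  by_contra hne
  have hpos : 0 < packingPre0 (s α) E := pos_iff_ne_zero.2 hne
  obtain ⟨x, hx0, hx1, hx2⟩ := ENNReal.lt_iff_exists_real_btwn.1 hpos
  have hxpos : 0 < x := ENNReal.ofReal_pos.1 hx1
  set δ : ℝ := min 1 ((x / (C + 1)) ^ (1 / l₁)) with hδdef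
  have hbase : 0 < x / (C + 1) := by positivity
  have hδpos : 0 < δ := lt_min one_pos (Real.rpow_pos_of_pos hbase _)
  have hδl₁ : δ ^ l₁ ≤ x / (C + 1) := by
    calc δ ^ l₁ ≤ ((x / (C + 1)) ^ (1 / l₁)) ^ l₁ :=
          Real.rpow_le_rpow hδpos.le (min_le_right _ _) (by linarith)
      _ = x / (C + 1) := by
          rw [← Real.rpow_mul hbase.le, one_div_mul_cancel (by linarith), Real.rpow_one]
  have hlt : δ ^ l₁ * C < x := by
    have h1 : δ ^ l₁ * C ≤ (x / (C + 1)) * C := by nlinarith [Real.rpow_pos_of_pos hδpos l₁]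
    have h2 : (x / (C + 1)) * C < x := by
      rw [div_mul_eq_mul_div, div_lt_iff₀ (by linarith)]
      nlinarith
    linarith
  have := main δ hδpos
  have : packingPre0 (s α) E < packingPre0 (s α) E :=
    lt_of_le_of_lt (le_trans this (ENNReal.ofReal_le_ofReal hlt.le)) hx2
  exact lt_irrefl _ this

/-- From a separated set we get a lower bound on the packing pre-measure. -/
lemma sep_pack_le_packingPre (E : Set X) {η ε : ℝ} (hη : 0 < η) (hηε : η ≤ ε)
    (S : Finset X) (hSE : (↑S : Set X) ⊆ E)
    (hsep : ∀ x ∈ S, ∀ y ∈ S, x ≠ y → η ≤ dist x y) (φ : ℝ → ℝ) :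
    (S.card : ℝ≥0∞) * ENNReal.ofReal (φ (η / 3)) ≤ packingPre φ E ε := by
  classical
  set t : Finset (X × ℝ) := S.image fun x => (x, η / 3) with htdef
  have hprops : (∀ p ∈ t, p.1 ∈ E ∧ p.2 ∈ Set.Ioc (0:ℝ) ε) ∧
      (↑t : Set (X × ℝ)).Pairwise fun p q => Disjoint (ball p.1 p.2 ∩ E) (ball q.1 q.2 ∩ E) := by
    constructor
    · intro p hp
      rw [htdef, Finset.mem_image] at hp
      obtain ⟨x, hx, rfl⟩ := hp
      refine ⟨hSE hx, ?_, ?_⟩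
      · show (0:ℝ) < η / 3
        linarith
      · show η / 3 ≤ ε
        linarith
    · intro p hp q hq hpq
      simp only [htdef, Finset.coe_image, Set.mem_image, Finset.mem_coe] at hp hq
      obtain ⟨x, hx, rfl⟩ := hp
      obtain ⟨y, hy, rfl⟩ := hq
      have hxy : x ≠ y := fun hh => hpq (by rw [hh])
      have hd : η ≤ dist x y := hsep x hx y hy hxy
      have hball : Disjoint (ball x (η / 3)) (ball y (η / 3)) :=
        ball_disjoint_ball (by linarith)
      exact hball.mono Set.inter_subset_left Set.inter_subset_left
  have hsum : ∑ p ∈ t, ENNReal.ofReal (φ p.2) =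
      (S.card : ℝ≥0∞) * ENNReal.ofReal (φ (η / 3)) := by
    rw [htdef, Finset.sum_image (fun x _ y _ h => congrArg Prod.fst h)]
    simp [Finset.sum_const, nsmul_eq_mul]
  refine le_trans (le_of_eq hsum.symm) ?_
  rw [packingPre]
  exact le_iSup₂ (f := fun (u : Finset (X × ℝ))
    (_ : (∀ p ∈ u, p.1 ∈ E ∧ p.2 ∈ Set.Ioc (0:ℝ) ε) ∧
      (↑u : Set (X × ℝ)).Pairwise fun p q => Disjoint (ball p.1 p.2 ∩ E) (ball q.1 q.2 ∩ E)) =>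
    ∑ p ∈ u, ENNReal.ofReal (φ p.2)) t hprops

/-- If `α` is below the upper box scale, the packing pre-measure is infinite. -/
lemma claimB {s : ℝ → ℝ → ℝ} (hs : IsScaling s) (E : Set X) {α : ℝ} (hα : 0 < α)
    (h : ENNReal.ofReal α < upperBoxScale s E) : packingPre0 (s α) E = ⊤ := by
  classical
  -- choose α' > α which does not witness the infimum
  obtain ⟨α', hαα', hnot⟩ : ∃ α', α < α' ∧
      ¬ Tendsto (fun ε : ℝ => coveringNumber E ε * ENNReal.ofReal (s α' ε))
        (𝓝[>] (0:ℝ)) (𝓝 (0 : ℝ≥0∞)) := by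
    by_cases hU : upperBoxScale s E = ⊤
    · refine ⟨α + 1, by linarith, fun htd => ?_⟩
      have : upperBoxScale s E ≤ ENNReal.ofReal (α + 1) :=
        iInf₂_le _ ⟨by linarith, htd⟩
      rw [hU] at this
      exact absurd (lt_of_le_of_lt this ENNReal.ofReal_lt_top) (lt_irrefl _)
    · set α' : ℝ := (α + (upperBoxScale s E).toReal) / 2 with hα'def
      have hαU : α < (upperBoxScale s E).toReal :=
        (ENNReal.ofReal_lt_iff_lt_toReal hα.le hU).1 h
      have h1 : α < α' := by rw [hα'def]; linarith
      have h2 : ENNReal.ofReal α' < upperBoxScale s E := by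
        rw [ENNReal.ofReal_lt_iff_lt_toReal (by linarith) hU, hα'def]
        linarith
      refine ⟨α', h1, fun htd => ?_⟩
      have : upperBoxScale s E ≤ ENNReal.ofReal α' := iInf₂_le _ ⟨by linarith, htd⟩
      exact absurd (lt_of_lt_of_le h2 this) (lt_irrefl _)
  rw [ENNReal.tendsto_nhds_zero] at hnot
  push_neg at hnot
  obtain ⟨b, hb, hfreq⟩ := hnot
  set b' : ℝ≥0∞ := min b 1 with hb'def
  have hb'pos : 0 < b' := lt_min hb one_pos
  have hb'top : b' ≠ ⊤ := fun hh => by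
    have : b' ≤ 1 := min_le_right _ _
    rw [hh] at this
    exact absurd (lt_of_le_of_lt this ENNReal.one_lt_top) (lt_irrefl _)
  have hfreq' : ∃ᶠ η in 𝓝[>] (0:ℝ),
      b' < coveringNumber E η * ENNReal.ofReal (s α' η) := by
    refine hfreq.mono fun η hη => ?_
    exact lt_of_le_of_lt (min_le_left _ _) hη
  rw [packingPre0, iInf_eq_top]
  intro ε
  rw [iInf_eq_top]
  intro hε
  by_contra hPne
  obtain ⟨n, hn⟩ := ENNReal.exists_nat_gt hPne
  -- scale constant
  have hbR : 0 < b'.toReal := ENNReal.toReal_pos hb'pos.ne' hb'top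
  set c : ℝ := b'.toReal / (n + 1) with hcdef
  have hcpos : 0 < c := by
    rw [hcdef]
    positivity
  have evsc := scaling_lower hs hα hαα' hcpos
  have evmem := eventually_Ioo (lt_min hε one_pos)
  obtain ⟨η, hbf, ⟨hpos3, hsc⟩, hη0, hηlt⟩ := (hfreq'.and_eventually (evsc.and evmem)).exists
  have hηε : η < ε := lt_of_lt_of_le hηlt (min_le_left _ _)
  have hη1 : η < 1 := lt_of_lt_of_le hηlt (min_le_right _ _)
  set a : ℝ := s α (η / 3) with hadef
  set m₀ : ℕ := ⌈(n : ℝ) / a⌉₊ + 1 with hm₀def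
  have hm₀a : (n : ℝ) ≤ (m₀ : ℝ) * a := by
    have h1 : (n : ℝ) / a ≤ (⌈(n : ℝ) / a⌉₊ : ℝ) := Nat.le_ceil _
    have h2 : ((⌈(n : ℝ) / a⌉₊ : ℝ)) ≤ (m₀ : ℝ) := by
      rw [hm₀def]
      push_cast
      linarith
    have := (div_le_iff₀ hpos3).1 (le_trans h1 h2)
    linarith
  have hcontr : (n : ℝ≥0∞) ≤ packingPre (s α) E ε := by
    by_cases hle : (m₀ : ℝ≥0∞) ≤ coveringNumber E η
    · obtain ⟨S, hSE, hSsep, hScard⟩ :=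
        exists_separated_of_le_coveringNumber E hη0 m₀ hle
      have hpack := sep_pack_le_packingPre E hη0 hηε.le S hSE hSsep (s α)
      refine le_trans ?_ hpack
      calc (n : ℝ≥0∞) = ENNReal.ofReal (n : ℝ) := (ENNReal.ofReal_natCast n).symm
        _ ≤ ENNReal.ofReal ((m₀ : ℝ) * a) := ENNReal.ofReal_le_ofReal hm₀a
        _ = (m₀ : ℝ≥0∞) * ENNReal.ofReal a := by
            rw [ENNReal.ofReal_mul (by positivity), ENNReal.ofReal_natCast]
        _ ≤ (S.card : ℝ≥0∞) * ENNReal.ofReal a := by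
            exact mul_le_mul_left (by exact_mod_cast hScard) _
    · rw [not_le] at hle
      have hNtop : coveringNumber E η ≠ ⊤ := fun hh => by
        rw [hh] at hle
        exact absurd (lt_of_le_of_lt le_top hle) (lt_irrefl _)
      obtain ⟨n₀, hn₀⟩ := (coveringNumber_eq_natCast_or_top E η).resolve_right hNtop
      obtain ⟨S, hSE, hSsep, hScard⟩ :=
        exists_separated_of_le_coveringNumber E hη0 n₀ (le_of_eq hn₀.symm)
      have hpack := sep_pack_le_packingPre E hη0 hηε.le S hSE hSsep (s α)
      refine le_trans ?_ hpack
      -- extract real inequality from hbf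
      have hsα'pos : 0 < s α' η := hs.1 α' (by linarith) η ⟨hη0, hη1⟩
      rw [hn₀, ← ENNReal.ofReal_natCast n₀,
        ← ENNReal.ofReal_mul (by positivity : (0:ℝ) ≤ (n₀:ℝ))] at hbf
      have hreal : b'.toReal < (n₀ : ℝ) * s α' η :=
        (ENNReal.lt_ofReal_iff_toReal_lt hb'top).1 hbf
      have hchain : b'.toReal < (n₀ : ℝ) * (c * a) := by
        have hn₀nn : (0:ℝ) ≤ (n₀:ℝ) := by positivity
        nlinarith [hsc]
      have hna : (n : ℝ) ≤ (n₀ : ℝ) * a := by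
        have hexp : (n₀ : ℝ) * (c * a) = ((n₀ : ℝ) * a) * b'.toReal / ((n : ℝ) + 1) := by
          rw [hcdef]; ring
        rw [hexp, lt_div_iff₀ (by positivity : (0:ℝ) < (n:ℝ) + 1)] at hchain
        have h2 : (n:ℝ) + 1 < (n₀ : ℝ) * a := by nlinarith [hbR]
        linarith
      calc (n : ℝ≥0∞) = ENNReal.ofReal (n : ℝ) := (ENNReal.ofReal_natCast n).symm
        _ ≤ ENNReal.ofReal ((n₀ : ℝ) * a) := ENNReal.ofReal_le_ofReal hna
        _ = (n₀ : ℝ≥0∞) * ENNReal.ofReal a := by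
            rw [ENNReal.ofReal_mul (by positivity), ENNReal.ofReal_natCast]
        _ ≤ (S.card : ℝ≥0∞) * ENNReal.ofReal a := by
            exact mul_le_mul_left (by exact_mod_cast hScard) _
  exact absurd (lt_of_le_of_lt hcontr hn) (lt_irrefl _)

end Claims



/-- Characterization of the upper box scale via the packing pre-measure:
`sup {α > 0 : P₀^{scl_α}(E) = ∞} = upper-scl_B E = inf {α > 0 : P₀^{scl_α}(E) = 0}`. -/
theorem upperBoxScale_eq_packingPre0_char
    {X : Type*} [MetricSpace X] (s : ℝ → ℝ → ℝ) (hs : IsScaling s) (E : Set X) :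
    (⨆ (α : ℝ) (_ : 0 < α ∧ packingPre0 (s α) E = ⊤), ENNReal.ofReal α) =
      upperBoxScale s E ∧
    upperBoxScale s E =
      (⨅ (α : ℝ) (_ : 0 < α ∧ packingPre0 (s α) E = 0), ENNReal.ofReal α) := by
  constructor
  · apply le_antisymm
    · refine iSup_le fun α => iSup_le fun hα => ?_
      obtain ⟨hαpos, hP⟩ := hα
      by_contra hcon
      rw [not_le] at hcon
      have h0 := claimA hs E hαpos hcon
      rw [h0] at hP
      exact ENNReal.zero_ne_top hP
    · by_contra hcon
      rw [not_le] at hcon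
      obtain ⟨x, hx0, hx1, hx2⟩ := ENNReal.lt_iff_exists_real_btwn.1 hcon
      have hxpos : 0 < x := by
        by_contra hxneg
        push_neg at hxneg
        rw [ENNReal.ofReal_eq_zero.2 hxneg] at hx1
        exact absurd hx1 (not_lt.2 zero_le)
      have hPB := claimB hs E hxpos hx2
      have hle : ENNReal.ofReal x ≤
          ⨆ (α : ℝ) (_ : 0 < α ∧ packingPre0 (s α) E = ⊤), ENNReal.ofReal α :=
        le_iSup₂ (f := fun (α : ℝ) (_ : 0 < α ∧ packingPre0 (s α) E = ⊤) =>
          ENNReal.ofReal α) x ⟨hxpos, hPB⟩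
      exact absurd (lt_of_le_of_lt hle hx1) (lt_irrefl _)
  · apply le_antisymm
    · refine le_iInf fun α => le_iInf fun hα => ?_
      obtain ⟨hαpos, hP⟩ := hα
      by_contra hcon
      rw [not_le] at hcon
      have h0 := claimB hs E hαpos hcon
      rw [h0] at hP
      exact ENNReal.top_ne_zero hP
    · by_contra hcon
      rw [not_le] at hcon
      obtain ⟨x, hx0, hx1, hx2⟩ := ENNReal.lt_iff_exists_real_btwn.1 hcon
      have hxpos : 0 < x := by
        by_contra hxneg
        push_neg at hxneg
        rw [ENNReal.ofReal_eq_zero.2 hxneg] at hx1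
        exact absurd hx1 (not_lt.2 zero_le)
      have hPA := claimA hs E hxpos hx1
      have hle : (⨅ (α : ℝ) (_ : 0 < α ∧ packingPre0 (s α) E = 0), ENNReal.ofReal α) ≤
          ENNReal.ofReal x :=
        iInf₂_le (f := fun (α : ℝ) (_ : 0 < α ∧ packingPre0 (s α) E = 0) =>
          ENNReal.ofReal α) x ⟨hxpos, hPA⟩
      exact absurd (lt_of_le_of_lt hle hx2) (lt_irrefl _)

end
end

section
/- Let (Z_n)_{n≥1} be nonempty finite sets, Z = ∏_{n≥1} Z_n, and let (ε_n)_{n≥1} be a decreasing sequence in (0,1) with ε_n → 0 and log ε_{n+1} / log ε_n → 1. Endow Z with the metric δ(x,y) = ε_m where m is the least index n with x_n ≠ y_n (and δ(x,y) = 0 if x = y), and let μ = ⊗_{n≥1} μ_n where μ_n is the uniform probability measure on Z_n. Then for any scaling scl and any x ∈ Z: lower-scl_loc μ(x) = lower-scl_B Z = sup{α > 0 : scl_α(ε_n) · ∏_{k=1}^n card(Z_k) → +∞ as n → ∞} and upper-scl_loc μ(x) = upper-scl_B Z = inf{α > 0 : scl_α(ε_n) · ∏_{k=1}^n card(Z_k)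 → 0 as n → ∞}. -/
open Filter MeasureTheory Metric Set
open scoped ENNReal Topology NNReal

noncomputable section

/-- Scales of an infinite product of finite sets with the product (ultra)metric and the
uniform product measure. -/
theorem scales_of_product_of_finite_sets
    {Z : ℕ → Type*} [∀ n, Fintype (Z n)] [∀ n, Nonempty (Z n)]
    [MetricSpace (∀ n, Z n)] [MeasurableSpace (∀ n, Z n)]
    (ε : ℕ → ℝ) (hε01 : ∀ n, ε n ∈ Set.Ioo (0:ℝ) 1) (hεdec : StrictAnti ε)
    (hε0 : Tendsto ε atTop (𝓝 0))
    (hεlog : Tendsto (fun n => Real.log (ε (n + 1)) / Real.log (ε n)) atTop (𝓝 1))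
    (hdist : ∀ x y : ∀ n, Z n, x ≠ y → dist x y = ε (sInf {n | x n ≠ y n}))
    (μ : Measure (∀ n, Z n))
    (hμ : ∀ (x : ∀ n, Z n) (n : ℕ),
      μ {y | ∀ k < n, y k = x k} = ∏ k ∈ Finset.range n, ((Fintype.card (Z k) : ℝ≥0∞))⁻¹)
    (s : ℝ → ℝ → ℝ) (hs : IsScaling s) (x : ∀ n, Z n) :
    (lowerLocalScale s μ x = lowerBoxScale s (Set.univ : Set (∀ n, Z n)) ∧
     lowerBoxScale s (Set.univ : Set (∀ n, Z n)) =
       ⨆ (α : ℝ) (_ : 0 < α ∧ Tendsto (fun n : ℕ => ENNReal.ofReal (s α (ε n)) *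
           ∏ k ∈ Finset.range (n + 1), (Fintype.card (Z k) : ℝ≥0∞))
         atTop (𝓝 (⊤ : ℝ≥0∞))), ENNReal.ofReal α) ∧
    (upperLocalScale s μ x = upperBoxScale s (Set.univ : Set (∀ n, Z n)) ∧
     upperBoxScale s (Set.univ : Set (∀ n, Z n)) =
       ⨅ (α : ℝ) (_ : 0 < α ∧ Tendsto (fun n : ℕ => ENNReal.ofReal (s α (ε n)) *
           ∏ k ∈ Finset.range (n + 1), (Fintype.card (Z k) : ℝ≥0∞))
         atTop (𝓝 (0 : ℝ≥0∞))), ENNReal.ofReal α) := by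
  classical
  haveI : ∀ m, Inhabited (Z m) := fun m => Classical.inhabited_of_nonempty'
  have hεpos : ∀ n, 0 < ε n := fun n => (hε01 n).1
  have hεlt1 : ∀ n, ε n < 1 := fun n => (hε01 n).2
  have hεanti : Antitone ε := hεdec.antitone
  set P : ℕ → ℝ≥0∞ := fun n => ∏ k ∈ Finset.range n, (Fintype.card (Z k) : ℝ≥0∞) with hP
  have hPne0 : ∀ n, P n ≠ 0 := by
    intro n
    rw [hP]
    refine Finset.prod_ne_zero_iff.2 fun k _ => ?_
    simp [Fintype.card_ne_zero]
  have hPnetop : ∀ n, P n ≠ ⊤ := by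
    intro n
    rw [hP]
    exact (ENNReal.prod_lt_top fun k _ => ENNReal.natCast_lt_top _).ne
  have hne : ∀ r : ℝ, 0 < r → {m | ε m < r}.Nonempty := by
    intro r hr
    rcases (hε0.eventually_lt_const hr).exists with ⟨m, hm⟩
    exact ⟨m, hm⟩
  set idx : ℝ → ℕ := fun r => sInf {m | ε m < r} with hidx
  have hidx_lt : ∀ r : ℝ, 0 < r → ε (idx r) < r := fun r hr => Nat.sInf_mem (hne r hr)
  have hidx_ge : ∀ (r : ℝ) (k : ℕ), k < idx r → r ≤ ε k := fun r k hk =>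
    le_of_not_gt (Nat.notMem_of_lt_sInf hk)
  -- balls are cylinders
  have hball : ∀ (z : ∀ n, Z n) (r : ℝ), 0 < r →
      ball z r = {y | ∀ k < idx r, y k = z k} := by
    intro z r hr
    ext y
    simp only [mem_ball, Set.mem_setOf_eq]
    by_cases hyz : y = z
    · subst hyz
      simp [dist_self, hr]
    · rw [hdist y z hyz]
      have hD : {n | y n ≠ z n}.Nonempty := by
        by_contra h
        exact hyz (funext fun n => by_contra fun hn => h ⟨n, hn⟩)
      constructor
      · intro h k hk
        by_contra hne'
        have h1 : sInf {n | y n ≠ z n} ≤ k := Nat.sInf_le hne'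
        exact absurd h (not_lt.2 (hidx_ge r _ (lt_of_le_of_lt h1 hk)))
      · intro h
        have hm : sInf {n | y n ≠ z n} ∈ {n | y n ≠ z n} := Nat.sInf_mem hD
        have h2 : idx r ≤ sInf {n | y n ≠ z n} := by
          by_contra h3
          exact hm (h _ (not_le.1 h3))
        calc ε (sInf {n | y n ≠ z n}) ≤ ε (idx r) := hεanti h2
        _ < r := hidx_lt r hr
  -- measure of balls
  have hμball : ∀ r : ℝ, 0 < r → μ (ball x r) = (P (idx r))⁻¹ := by
    intro r hr
    rw [hball x r hr, hμ x (idx r), hP]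
    rw [ENNReal.prod_inv_distrib]
    intro i _ j _ _
    left
    simp [Fintype.card_ne_zero]
  -- covering numbers
  have hcov : ∀ r : ℝ, 0 < r → coveringNumber (Set.univ : Set (∀ n, Z n)) r = P (idx r) := by
    intro r hr
    set n := idx r with hn
    set f : (∀ k : Fin n, Z k) → (∀ m, Z m) := fun v m =>
      if h : m < n then v ⟨m, h⟩ else default with hf
    have hfk : ∀ (v) (k : ℕ) (hk : k < n), f v k = v ⟨k, hk⟩ := by
      intro v k hk; simp [hf, hk]
    have hcard : (Fintype.card (∀ k : Fin n, Z k) : ℝ≥0∞) = P n := by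
      rw [Fintype.card_pi, hP]
      push_cast
      rw [Fin.prod_univ_eq_prod_range (fun k => (Fintype.card (Z k) : ℝ≥0∞)) n]
    refine le_antisymm ?_ ?_
    · set t : Finset (∀ m, Z m) := Finset.image f Finset.univ with ht
      have hprop : (↑t : Set (∀ m, Z m)) ⊆ Set.univ ∧
          Set.univ ⊆ ⋃ c ∈ t, ball c r := by
        refine ⟨Set.subset_univ _, fun y _ => ?_⟩
        refine Set.mem_iUnion₂.2 ⟨f (fun k => y k), Finset.mem_image_of_mem _ (Finset.mem_univ _), ?_⟩
        rw [hball _ r hr]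
        intro k hk
        exact (hfk (fun k => y k) k hk).symm
      calc coveringNumber (Set.univ : Set (∀ n, Z n)) r ≤ (t.card : ℝ≥0∞) :=
            iInf₂_le t hprop
      _ ≤ (Fintype.card (∀ k : Fin n, Z k) : ℝ≥0∞) := by
            exact_mod_cast Nat.cast_le.2 ((Finset.card_image_le).trans_eq Finset.card_univ)
      _ = P n := hcard
    · refine le_iInf₂ fun t htp => ?_
      rw [← hcard]
      norm_cast
      have hchoice : ∀ v : (∀ k : Fin n, Z k), ∃ c ∈ t, f v ∈ ball c r := by
        intro v
        have := htp.2 (Set.mem_univ (f v))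
        simpa using this
      choose g hg hgball using hchoice
      refine Finset.card_le_card_of_injOn g (fun v _ => hg v) ?_
      intro v _ w _ hvw
      funext k
      have h1 := hgball v
      have h2 := hgball w
      rw [hball _ r hr] at h1 h2
      have e1 := (hfk v k.1 k.2).symm.trans (h1 k.1 k.2)
      have e2 := (hfk w k.1 k.2).symm.trans (h2 k.1 k.2)
      rw [hvw] at e1
      exact e1.trans e2.symm
  -- equivalence of local and box conditions for each α
  have hlocbox : ∀ α : ℝ, 0 < α →
      (∀ c : ℝ≥0∞, Tendsto (fun r : ℝ => μ (ball x r) / ENNReal.ofReal (s α r))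
        (𝓝[>] (0:ℝ)) (𝓝 c⁻¹) ↔
      Tendsto (fun r : ℝ => coveringNumber (Set.univ : Set (∀ n, Z n)) r *
        ENNReal.ofReal (s α r)) (𝓝[>] (0:ℝ)) (𝓝 c)) := by
    intro α hα c
    have hEv : ∀ᶠ r in 𝓝[>] (0:ℝ),
        μ (ball x r) / ENNReal.ofReal (s α r) =
        (coveringNumber (Set.univ : Set (∀ n, Z n)) r * ENNReal.ofReal (s α r))⁻¹ := by
      filter_upwards [Ioo_mem_nhdsGT_of_mem (by simp : (0:ℝ) ∈ Set.Ico (0:ℝ) 1)] with r hr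
      rw [hμball r hr.1, hcov r hr.1, ENNReal.mul_inv (Or.inl (hPne0 _)) (Or.inl (hPnetop _)),
        div_eq_mul_inv]
    rw [tendsto_congr' hEv]
    exact ENNReal.tendsto_inv_iff
  have hε0' : Tendsto ε atTop (𝓝[>] (0:ℝ)) :=
    tendsto_nhdsWithin_of_tendsto_nhds_of_eventually_within ε hε0
      (Eventually.of_forall fun n => hεpos n)
  have hidx_eps : ∀ n : ℕ, idx (ε n) = n + 1 := by
    intro n
    refine le_antisymm (Nat.sInf_le (hεdec (Nat.lt_succ_self n))) ?_
    by_contra h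
    have h1 : idx (ε n) ≤ n := by omega
    exact absurd (hidx_lt (ε n) (hεpos n)) (not_lt.2 (hεanti h1))
  -- from the continuous condition to the sequential one
  have hseq_of_cont : ∀ (α : ℝ) (c : ℝ≥0∞),
      Tendsto (fun r : ℝ => coveringNumber (Set.univ : Set (∀ n, Z n)) r *
        ENNReal.ofReal (s α r)) (𝓝[>] (0:ℝ)) (𝓝 c) →
      Tendsto (fun n : ℕ => ENNReal.ofReal (s α (ε n)) * P (n+1)) atTop (𝓝 c) := by
    intro α c hc
    refine (hc.comp hε0').congr fun n => ?_
    simp only [Function.comp_apply]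
    rw [hcov (ε n) (hεpos n), hidx_eps n, mul_comm]
  -- locating a radius in the sequence
  have hinterval : ∀ (N : ℕ) (r : ℝ), r ∈ Set.Ioo (0:ℝ) (ε N) →
      N ≤ idx r - 1 ∧ idx r = (idx r - 1) + 1 ∧ ε (idx r) < r ∧ r ≤ ε (idx r - 1) := by
    intro N r hr
    have h1 : N < idx r := by
      by_contra h
      have h2 : ε N ≤ ε (idx r) := hεanti (not_lt.1 h)
      exact absurd ((hidx_lt r hr.1).trans hr.2) (not_lt.2 h2)
    exact ⟨by omega, by omega, hidx_lt r hr.1, hidx_ge r _ (by omega)⟩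
  have hidx_top : Tendsto (fun r : ℝ => idx r - 1) (𝓝[>] (0:ℝ)) atTop := by
    refine tendsto_atTop.2 fun N => ?_
    filter_upwards [Ioo_mem_nhdsGT_of_mem ⟨le_refl (0:ℝ), hεpos N⟩] with r hr
    exact (hinterval N r hr).1
  -- the scaling comparison, lower version
  have hB : ∀ α β : ℝ, 0 < β → β < α →
      Tendsto (fun n : ℕ => ENNReal.ofReal (s α (ε n)) * P (n+1)) atTop (𝓝 ⊤) →
      Tendsto (fun r : ℝ => coveringNumber (Set.univ : Set (∀ n, Z n)) r *
        ENNReal.ofReal (s β r)) (𝓝[>] (0:ℝ)) (𝓝 ⊤) := by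
    intro α β hβ hβα hS
    obtain ⟨l₀, hl₀, hl⟩ := hs.2.2 α β hβ hβα
    set l := (1 + l₀)/2 with hldef
    have hl1 : 1 < l := by rw [hldef]; linarith
    have hll₀ : l < l₀ := by rw [hldef]; linarith
    obtain ⟨h1, -⟩ := hl l ⟨hl1, hll₀⟩
    have hev2 : ∀ᶠ n in atTop, s α (ε n) ≤ s β (ε n ^ l) := by
      filter_upwards [(h1.comp hε0').eventually_lt_const one_pos] with n hn
      simp only [Function.comp_apply] at hn
      have hpow : ε n ^ l ∈ Set.Ioo (0:ℝ) 1 :=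
        ⟨Real.rpow_pos_of_pos (hεpos n) l,
         Real.rpow_lt_one (hεpos n).le (hεlt1 n) (by linarith)⟩
      have hsβ : 0 < s β (ε n ^ l) := hs.1 β hβ _ hpow
      exact ((div_lt_one hsβ).1 hn).le
    have hev3 : ∀ᶠ n in atTop, ε n ^ l ≤ ε (n+1) := by
      filter_upwards [hεlog.eventually_lt_const hl1] with n hn
      have hlogneg : Real.log (ε n) < 0 := Real.log_neg (hεpos n) (hεlt1 n)
      have h2 : l * Real.log (ε n) < Real.log (ε (n+1)) := (div_lt_iff_of_neg hlogneg).1 hn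
      rw [← Real.log_rpow (hεpos n) l] at h2
      exact ((Real.log_lt_log_iff (Real.rpow_pos_of_pos (hεpos n) l) (hεpos (n+1))).1 h2).le
    obtain ⟨N₀, hN₀⟩ := eventually_atTop.1 (hev2.and hev3)
    refine tendsto_nhds_top_mono (hS.comp hidx_top) ?_
    filter_upwards [Ioo_mem_nhdsGT_of_mem ⟨le_refl (0:ℝ), hεpos N₀⟩] with r hr
    simp only [Function.comp_apply]
    obtain ⟨hN, hidxeq, hlt, hle⟩ := hinterval N₀ r hr
    set n := idx r - 1 with hndef
    obtain ⟨hc1, hc2⟩ := hN₀ n hN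
    rw [hidxeq] at hlt
    have hrIoo : r ∈ Set.Ioo (0:ℝ) 1 := ⟨hr.1, lt_of_le_of_lt hle (hεlt1 n)⟩
    have hpowIoo : ε n ^ l ∈ Set.Ioo (0:ℝ) 1 :=
      ⟨Real.rpow_pos_of_pos (hεpos n) l,
       Real.rpow_lt_one (hεpos n).le (hεlt1 n) (by linarith)⟩
    have hmono : s β (ε n ^ l) ≤ s β r :=
      hs.2.1 β hβ hpowIoo hrIoo (hc2.trans hlt.le)
    have h4 : s α (ε n) ≤ s β r := hc1.trans hmono
    rw [hcov r hr.1, hidxeq, mul_comm (ENNReal.ofReal (s α (ε n)))]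
    exact mul_le_mul_right (ENNReal.ofReal_le_ofReal h4) _
  -- the scaling comparison, upper version
  have hB' : ∀ α γ : ℝ, 0 < α → α < γ →
      Tendsto (fun n : ℕ => ENNReal.ofReal (s α (ε n)) * P (n+1)) atTop (𝓝 0) →
      Tendsto (fun r : ℝ => coveringNumber (Set.univ : Set (∀ n, Z n)) r *
        ENNReal.ofReal (s γ r)) (𝓝[>] (0:ℝ)) (𝓝 0) := by
    intro α γ hα hαγ hS
    have hγ : 0 < γ := hα.trans hαγ
    obtain ⟨l₀, hl₀, hl⟩ := hs.2.2 γ α hα hαγ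
    set l := (1 + l₀)/2 with hldef
    have hl1 : 1 < l := by rw [hldef]; linarith
    have hll₀ : l < l₀ := by rw [hldef]; linarith
    obtain ⟨h1, -⟩ := hl l ⟨hl1, hll₀⟩
    have hev2 : ∀ᶠ n in atTop, s γ (ε n) ≤ s α (ε n) := by
      filter_upwards [(h1.comp hε0').eventually_lt_const one_pos] with n hn
      simp only [Function.comp_apply] at hn
      have hpow : ε n ^ l ∈ Set.Ioo (0:ℝ) 1 :=
        ⟨Real.rpow_pos_of_pos (hεpos n) l,
         Real.rpow_lt_one (hεpos n).le (hεlt1 n) (by linarith)⟩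
      have hsα : 0 < s α (ε n ^ l) := hs.1 α hα _ hpow
      have hA : s γ (ε n) < s α (ε n ^ l) := (div_lt_one hsα).1 hn
      have hpow_le : ε n ^ l ≤ ε n := by
        have := Real.rpow_le_rpow_of_exponent_ge (hεpos n) (hεlt1 n).le hl1.le
        rwa [Real.rpow_one] at this
      exact hA.le.trans (hs.2.1 α hα hpow (hε01 n) hpow_le)
    obtain ⟨N₀, hN₀⟩ := eventually_atTop.1 hev2
    have h0 : (0:ℝ≥0∞) = ⊥ := rfl
    rw [h0]
    refine tendsto_nhds_bot_mono (h0 ▸ hS.comp hidx_top) ?_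
    filter_upwards [Ioo_mem_nhdsGT_of_mem ⟨le_refl (0:ℝ), hεpos N₀⟩] with r hr
    simp only [Function.comp_apply]
    obtain ⟨hN, hidxeq, hlt, hle⟩ := hinterval N₀ r hr
    set n := idx r - 1 with hndef
    have hrIoo : r ∈ Set.Ioo (0:ℝ) 1 := ⟨hr.1, lt_of_le_of_lt hle (hεlt1 n)⟩
    have h4 : s γ r ≤ s α (ε n) := (hs.2.1 γ hγ hrIoo (hε01 n) hle).trans (hN₀ n hN)
    rw [hcov r hr.1, hidxeq, mul_comm (P (n+1))]
    exact mul_le_mul_left (ENNReal.ofReal_le_ofReal h4) _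
  -- assembling everything
  refine ⟨⟨?_, ?_⟩, ?_, ?_⟩
  · -- lower local = lower box
    simp only [lowerLocalScale, lowerBoxScale]
    refine le_antisymm (iSup₂_le fun α h => ?_) (iSup₂_le fun α h => ?_)
    · exact le_iSup₂ (f := fun (α : ℝ) (_ : _) => ENNReal.ofReal α) α
        ⟨h.1, (hlocbox α h.1 ⊤).1 (by rw [ENNReal.inv_top]; exact h.2)⟩
    · refine le_iSup₂ (f := fun (α : ℝ) (_ : _) => ENNReal.ofReal α) α ⟨h.1, ?_⟩
      have := (hlocbox α h.1 ⊤).2 h.2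
      rwa [ENNReal.inv_top] at this
  · -- lower box = sequential sup
    simp only [lowerBoxScale]
    refine le_antisymm (iSup₂_le fun α h =>
      le_iSup₂ (f := fun (α : ℝ) (_ : _) => ENNReal.ofReal α) α
        ⟨h.1, hseq_of_cont α ⊤ h.2⟩) (iSup₂_le fun α h => ?_)
    refine le_of_forall_lt fun c hc => ?_
    have hctop : c ≠ ⊤ := (hc.trans ENNReal.ofReal_lt_top).ne
    have hc' : c.toReal < α := (ENNReal.lt_ofReal_iff_toReal_lt hctop).1 hc
    set β := (c.toReal + α)/2 with hβdef
    have hβpos : 0 < β := by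
      have := ENNReal.toReal_nonneg (a := c)
      rw [hβdef]; linarith
    have hβα : β < α := by rw [hβdef]; linarith
    have hcβ : c < ENNReal.ofReal β := by
      rw [ENNReal.lt_ofReal_iff_toReal_lt hctop, hβdef]; linarith
    exact hcβ.trans_le (le_iSup₂ (f := fun (β : ℝ) (_ : _) => ENNReal.ofReal β) β
      ⟨hβpos, hB α β hβpos hβα h.2⟩)
  · -- upper local = upper box
    simp only [upperLocalScale, upperBoxScale]
    refine le_antisymm (le_iInf₂ fun α h => ?_) (le_iInf₂ fun α h => ?_)
    · refine iInf₂_le (f := fun (α : ℝ) (_ : _) => ENNReal.ofReal α) α ⟨h.1, ?_⟩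
      have := (hlocbox α h.1 0).2 h.2
      rwa [ENNReal.inv_zero] at this
    · exact iInf₂_le (f := fun (α : ℝ) (_ : _) => ENNReal.ofReal α) α
        ⟨h.1, (hlocbox α h.1 0).1 (by rw [ENNReal.inv_zero]; exact h.2)⟩
  · -- upper box = sequential inf
    simp only [upperBoxScale]
    refine le_antisymm (le_iInf₂ fun α h => ?_) (le_iInf₂ fun α h =>
      iInf₂_le (f := fun (α : ℝ) (_ : _) => ENNReal.ofReal α) α
        ⟨h.1, hseq_of_cont α 0 h.2⟩)
    refine le_of_forall_gt fun c hc => ?_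
    by_cases hctop : c = ⊤
    · subst hctop
      refine lt_of_le_of_lt (iInf₂_le (f := fun (α : ℝ) (_ : _) => ENNReal.ofReal α) (α + 1)
        ⟨by linarith [h.1], hB' α (α + 1) h.1 (lt_add_one α) h.2⟩) ENNReal.ofReal_lt_top
    · have hc' : α < c.toReal := (ENNReal.ofReal_lt_iff_lt_toReal h.1.le hctop).1 hc
      set γ := (α + c.toReal)/2 with hγdef
      have hαγ : α < γ := by rw [hγdef]; linarith
      have hγc : ENNReal.ofReal γ < c := by
        rw [ENNReal.ofReal_lt_iff_lt_toReal (by linarith [h.1]) hctop, hγdef]; linarith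
      exact lt_of_le_of_lt (iInf₂_le (f := fun (α : ℝ) (_ : _) => ENNReal.ofReal α) γ
        ⟨by linarith [h.1], hB' α γ h.1 hαγ h.2⟩) hγc


end
end
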